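/- arXiv:2010.08714 — 3 statements merged into one kernel-verified Lean document; each statement's English description precedes it below -/
import Mathlib

section
/- There is an absolute constant C > 0 such that for every u₀ ∈ H^{3,3}(ℝ), the functions W(x,k) = k ∫_x^∞ e^{2ik²(x−y)} q(y) dy and W_k(x,k) = ∫_x^∞ e^{2ik²(x−y)} (1 + 4ik²(x−y)) q(y) dy (the derivative of W in k) satisfy: (i) sup_{x ≥ 0} (∫_{I₀} |W(x,k)|² |dk|)^{1/2} ≤ C ‖u₀‖_{H^{2,2}}; (ii) (∫_0^∞ ∫_{I₀} |W(x,k)|² |dk| dx)^{1/2} ≤ C ‖u₀‖_{H^{3,3}}; (iii) sup_{x ≥ 0} (∫_{I₀} |W_k(x,k)|² |dk|)^{1/2} ≤ C ‖u₀‖_{H^{2,2}}; (iv) (∫_0^∞ ∫_{I₀} |W_k(x,k)|² |dk| dx)^{1/2} ≤ C ‖u₀‖_{H^{2,2}}. Here |dk| denotes arclength measure on I₀. -/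
open MeasureTheory Complex Set

noncomputable section

/-- Membership in the weighted Sobolev space `H^{m,s}(ℝ)`. -/
def MemHms (m s : ℕ) (u : ℝ → ℂ) : Prop :=
  ∀ j ≤ m, MemLp (fun x : ℝ => ((1 + x ^ 2) ^ ((s : ℝ) / 2) : ℝ) • iteratedDeriv j u x) 2 volume

/-- The `H^{m,s}(ℝ)` norm. -/
def HmsNorm (m s : ℕ) (u : ℝ → ℂ) : ℝ :=
  ∑ j ∈ Finset.range (m + 1),
    (eLpNorm (fun x : ℝ => ((1 + x ^ 2) ^ ((s : ℝ) / 2) : ℝ) • iteratedDeriv j u x) 2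
      volume).toReal

/-- `φ(x) = ∫_{−∞}^x |u₀'(s)|² ds`. -/
def phi (u₀ : ℝ → ℂ) (x : ℝ) : ℝ := ∫ s in Iio x, ‖deriv u₀ s‖ ^ 2

/-- `q(x) = conj (u₀'(x)) e^{iφ(x)}`. -/
def qf (u₀ : ℝ → ℂ) (x : ℝ) : ℂ :=
  (starRingEnd ℂ) (deriv u₀ x) * Complex.exp (Complex.I * (phi u₀ x : ℝ))

/-- Arclength measure on `I₀ = {k ∈ ℝ ∪ iℝ : |k| < 1}`. -/
def muI0 : Measure ℂ :=
  (volume.restrict (Ioo (-1 : ℝ) 1)).map (fun s : ℝ => (s : ℂ))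
    + (volume.restrict (Ioo (-1 : ℝ) 1)).map (fun s : ℝ => Complex.I * s)

/-- `W(x,k) = k ∫_x^∞ e^{2ik²(x−y)} q(y) dy`. -/
def Wfun (u₀ : ℝ → ℂ) (x : ℝ) (k : ℂ) : ℂ :=
  k * ∫ y in Ioi x, Complex.exp (2 * Complex.I * k ^ 2 * ((x - y : ℝ) : ℂ)) * qf u₀ y

/-- `W_k(x,k) = ∫_x^∞ e^{2ik²(x−y)} (1 + 4ik²(x−y)) q(y) dy`. -/
def Wkfun (u₀ : ℝ → ℂ) (x : ℝ) (k : ℂ) : ℂ :=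
  ∫ y in Ioi x, Complex.exp (2 * Complex.I * k ^ 2 * ((x - y : ℝ) : ℂ))
    * (1 + 4 * Complex.I * k ^ 2 * ((x - y : ℝ) : ℂ)) * qf u₀ y

open Filter
open scoped ENNReal NNReal

lemma lemA (x : ℝ) (hx : 0 ≤ x) :
    ∫⁻ y in Ioi x, ENNReal.ofReal ((1+y) ^ (-(3/2) : ℝ)) ≤
      ENNReal.ofReal (2 * (1+x) ^ (-(1/2) : ℝ)) := by
  have hderiv : ∀ y ∈ Ici x, HasDerivAt (fun y : ℝ => -2 * (1+y) ^ (-(1/2) : ℝ))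
      ((1+y) ^ (-(3/2) : ℝ)) y := by
    intro y hy
    have h1y : (0:ℝ) < 1 + y := by simp only [mem_Ici] at hy; linarith
    have h1 : HasDerivAt (fun y : ℝ => 1 + y) 1 y := by
      simpa using (hasDerivAt_id y).const_add 1
    have h2 : HasDerivAt (fun z : ℝ => z ^ (-(1/2) : ℝ))
        ((-(1/2)) * (1+y) ^ ((-(1/2) : ℝ) - 1)) (1+y) :=
      Real.hasDerivAt_rpow_const (Or.inl h1y.ne')
    have h3 : HasDerivAt (fun y : ℝ => (1+y) ^ (-(1/2) : ℝ))
        ((-(1/2)) * (1+y) ^ ((-(1/2) : ℝ) - 1)) y := by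
      have := h2.comp y h1; simp only [mul_one] at this; exact this
    have h4 := h3.const_mul (-2 : ℝ)
    have e : ((1+y) ^ (-(3/2) : ℝ)) = -2 * ((-(1/2)) * (1+y) ^ ((-(1/2) : ℝ) - 1)) := by
      rw [show ((-(1/2) : ℝ) - 1) = (-(3/2) : ℝ) by norm_num]; ring
    rw [e]; exact h4
  have hpos : ∀ y ∈ Ioi x, (0:ℝ) ≤ (1+y) ^ (-(3/2) : ℝ) := by
    intro y hy
    have : (0:ℝ) < 1 + y := by simp only [mem_Ioi] at hy; linarith
    positivity
  have htend : Tendsto (fun y : ℝ => -2 * (1+y) ^ (-(1/2) : ℝ)) atTop (nhds 0) := by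
    have h0 : Tendsto (fun z : ℝ => z ^ (-(1/2) : ℝ)) atTop (nhds 0) :=
      tendsto_rpow_neg_atTop (by norm_num)
    have h1 : Tendsto (fun y : ℝ => 1 + y) atTop atTop :=
      tendsto_atTop_add_const_left _ 1 tendsto_id
    have := (h0.comp h1).const_mul (-2 : ℝ)
    simpa using this
  have hint : IntegrableOn (fun y : ℝ => (1+y) ^ (-(3/2) : ℝ)) (Ioi x) :=
    integrableOn_Ioi_deriv_of_nonneg' hderiv hpos htend
  have heq : ∫ y in Ioi x, (1+y) ^ (-(3/2) : ℝ) = 0 - (-2 * (1+x) ^ (-(1/2) : ℝ)) :=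
    integral_Ioi_of_hasDerivAt_of_nonneg' hderiv hpos htend
  rw [← ofReal_integral_eq_lintegral_ofReal hint
    ((ae_restrict_iff' measurableSet_Ioi).2 (Filter.Eventually.of_forall hpos))]
  apply ENNReal.ofReal_le_ofReal
  rw [heq]; ring_nf
  exact le_rfl


lemma lemB (y : ℝ) :
    ∫⁻ x in Ioo 0 y, ENNReal.ofReal ((1+x) ^ (-(1/2) : ℝ)) ≤
      ENNReal.ofReal (2 * (1+y) ^ ((1/2) : ℝ)) := by
  rcases le_or_gt y 0 with hy | hy
  · rw [Ioo_eq_empty (by exact fun h => absurd h (not_lt.2 hy))]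
    simp
  · have hderiv : ∀ x ∈ Icc (0:ℝ) y, HasDerivAt (fun x : ℝ => 2 * (1+x) ^ ((1/2) : ℝ))
        ((1+x) ^ (-(1/2) : ℝ)) x := by
      intro x hxm
      have h1x : (0:ℝ) < 1 + x := by have := hxm.1; linarith
      have h1 : HasDerivAt (fun x : ℝ => 1 + x) 1 x := by
        simpa using (hasDerivAt_id x).const_add 1
      have h2 : HasDerivAt (fun z : ℝ => z ^ ((1/2) : ℝ))
          (((1/2) : ℝ) * (1+x) ^ (((1/2) : ℝ) - 1)) (1+x) :=
        Real.hasDerivAt_rpow_const (Or.inl h1x.ne')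
      have h3 : HasDerivAt (fun x : ℝ => (1+x) ^ ((1/2) : ℝ))
          (((1/2) : ℝ) * (1+x) ^ (((1/2) : ℝ) - 1)) x := by
        have := h2.comp x h1; simp only [mul_one] at this; exact this
      have h4 := h3.const_mul (2 : ℝ)
      have e : ((1+x) ^ (-(1/2) : ℝ)) = 2 * (((1/2) : ℝ) * (1+x) ^ (((1/2) : ℝ) - 1)) := by
        rw [show (((1/2) : ℝ) - 1) = (-(1/2) : ℝ) by norm_num]; ring
      rw [e]; exact h4
    have hcont : ContinuousOn (fun x : ℝ => (1+x) ^ (-(1/2) : ℝ)) (Icc 0 y) := by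
      intro x hxm
      have h1x : (0:ℝ) < 1 + x := by have := hxm.1; linarith
      exact ((continuous_const.add continuous_id).continuousWithinAt).rpow_const
        (Or.inl (by simpa using h1x.ne'))
    have hii : IntervalIntegrable (fun x : ℝ => (1+x) ^ (-(1/2) : ℝ)) volume 0 y := by
      apply ContinuousOn.intervalIntegrable
      rwa [uIcc_of_le hy.le]
    have heq : ∫ x in (0:ℝ)..y, (1+x) ^ (-(1/2) : ℝ)
        = 2 * (1+y) ^ ((1/2) : ℝ) - 2 * (1+0) ^ ((1/2) : ℝ) := by
      apply intervalIntegral.integral_eq_sub_of_hasDerivAt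
      · intro x hxm; exact hderiv x (by rwa [uIcc_of_le hy.le] at hxm)
      · exact hii
    rw [intervalIntegral.integral_of_le hy.le] at heq
    have hIoc : IntegrableOn (fun x : ℝ => (1+x) ^ (-(1/2) : ℝ)) (Ioc 0 y) := by
      rwa [intervalIntegrable_iff_integrableOn_Ioc_of_le hy.le] at hii
    have hle : ∫⁻ x in Ioo 0 y, ENNReal.ofReal ((1+x) ^ (-(1/2) : ℝ))
        ≤ ∫⁻ x in Ioc 0 y, ENNReal.ofReal ((1+x) ^ (-(1/2) : ℝ)) :=
      lintegral_mono' (Measure.restrict_mono Ioo_subset_Ioc_self le_rfl) le_rfl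
    refine hle.trans ?_
    rw [← ofReal_integral_eq_lintegral_ofReal hIoc
      ((ae_restrict_iff' measurableSet_Ioc).2 (Filter.Eventually.of_forall fun x hxm => by
        have : (0:ℝ) < 1 + x := by have := hxm.1; linarith
        positivity))]
    apply ENNReal.ofReal_le_ofReal
    rw [heq]
    have : (0:ℝ) ≤ 2 * (1+0 : ℝ) ^ ((1/2):ℝ) := by positivity
    linarith


lemma ptBound (f : ℝ → ℝ≥0∞) (hf : Measurable f) (x : ℝ) (hx : 0 ≤ x) :
    ∫⁻ y in Ioi x, ENNReal.ofReal (1+4*(y-x)) * f y ≤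
      15 * (∫⁻ y, (ENNReal.ofReal (1+y^2) * f y) ^ (2:ℝ)) ^ ((1:ℝ)/2) := by
  set c : ℝ → ℝ≥0∞ := fun y => ENNReal.ofReal (5*(1+y)*(1+y^2)⁻¹) with hc
  set g : ℝ → ℝ≥0∞ := fun y => ENNReal.ofReal (1+y^2) * f y with hg
  have hcm : Measurable c := by
    apply Measurable.ennreal_ofReal; fun_prop
  have hw : Measurable fun y : ℝ => (1+y^2 : ℝ) := by fun_prop
  have hgm : Measurable g := hw.ennreal_ofReal.mul hf
  have step1 : ∫⁻ y in Ioi x, ENNReal.ofReal (1+4*(y-x)) * f y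
      ≤ ∫⁻ y in Ioi x, (c * g) y := by
    apply lintegral_mono_ae
    filter_upwards [ae_restrict_mem measurableSet_Ioi] with y hy
    have hxy : x < y := hy
    have hy0 : (0:ℝ) ≤ y := le_trans hx hxy.le
    simp only [Pi.mul_apply, hc, hg]
    rw [← mul_assoc, ← ENNReal.ofReal_mul (by positivity)]
    apply mul_le_mul_left
    apply ENNReal.ofReal_le_ofReal
    have h1 : (0:ℝ) < 1 + y^2 := by positivity
    rw [mul_assoc, inv_mul_cancel₀ h1.ne', mul_one]
    nlinarith
  have step2 : ∫⁻ y in Ioi x, (c * g) y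
      ≤ (∫⁻ y in Ioi x, c y ^ (2:ℝ)) ^ ((1:ℝ)/2) * (∫⁻ y in Ioi x, g y ^ (2:ℝ)) ^ ((1:ℝ)/2) := by
    simpa using ENNReal.lintegral_mul_le_Lp_mul_Lq (volume.restrict (Ioi x))
      Real.HolderConjugate.two_two
      hcm.aemeasurable hgm.aemeasurable
  have step3 : ∫⁻ y in Ioi x, c y ^ (2:ℝ) ≤ ENNReal.ofReal 200 := by
    have pt : ∀ y ∈ Ioi x, c y ^ (2:ℝ) ≤
        ENNReal.ofReal 100 * ENNReal.ofReal ((1+y) ^ (-(3/2) : ℝ)) := by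
      intro y hy
      have hxy : x < y := hy
      have hy0 : (0:ℝ) ≤ y := le_trans hx hxy.le
      have h1y : (0:ℝ) < 1 + y := by linarith
      have h2y : (0:ℝ) < 1 + y^2 := by positivity
      have hb : c y = ENNReal.ofReal (5*(1+y)*(1+y^2)⁻¹) := rfl
      rw [hb, ENNReal.ofReal_rpow_of_nonneg (by positivity) (by norm_num),
        ← ENNReal.ofReal_mul (by norm_num)]
      apply ENNReal.ofReal_le_ofReal
      rw [Real.rpow_two]
      have key : (1+y)^2 ≤ 2*(1+y^2) := by nlinarith [sq_nonneg (1-y)]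
      have e1 : (1+y) ^ (-(2:ℝ)) ≤ (1+y) ^ (-(3/2):ℝ) :=
        Real.rpow_le_rpow_of_exponent_le (by linarith) (by norm_num)
      have e2 : (5*(1+y)*(1+y^2)⁻¹)^2 ≤ 100 * (1+y) ^ (-(2:ℝ)) := by
        rw [show ((1+y) ^ (-(2:ℝ))) = ((1+y)^2)⁻¹ by
          rw [Real.rpow_neg h1y.le, Real.rpow_two]]
        have h2 : (0:ℝ) < (1+y^2)^2 := by positivity
        have hA : (0:ℝ) < (1+y)^2 := by positivity
        rw [show (5*(1+y)*(1+y^2)⁻¹)^2 = 25*(1+y)^2 / (1+y^2)^2 by field_simp; ring,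
          show (100:ℝ) * ((1+y)^2)⁻¹ = 100 / (1+y)^2 by ring,
          div_le_div_iff₀ h2 hA]
        have hm := mul_le_mul key key (by positivity) (by positivity)
        nlinarith [hm]
      calc (5*(1+y)*(1+y^2)⁻¹)^2 ≤ 100 * (1+y) ^ (-(2:ℝ)) := e2
        _ ≤ 100 * (1+y) ^ (-(3/2):ℝ) := by linarith
    calc ∫⁻ y in Ioi x, c y ^ (2:ℝ)
        ≤ ∫⁻ y in Ioi x, ENNReal.ofReal 100 * ENNReal.ofReal ((1+y) ^ (-(3/2) : ℝ)) := by
          apply lintegral_mono_ae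
          filter_upwards [ae_restrict_mem measurableSet_Ioi] with y hy using pt y hy
      _ = ENNReal.ofReal 100 * ∫⁻ y in Ioi x, ENNReal.ofReal ((1+y) ^ (-(3/2) : ℝ)) :=
          lintegral_const_mul' _ _ (by simp)
      _ ≤ ENNReal.ofReal 100 * ENNReal.ofReal (2 * (1+x) ^ (-(1/2) : ℝ)) :=
          mul_le_mul_right (lemA x hx) _
      _ ≤ ENNReal.ofReal 100 * ENNReal.ofReal 2 := by
          apply mul_le_mul_right
          apply ENNReal.ofReal_le_ofReal
          have : (1+x) ^ (-(1/2) : ℝ) ≤ 1 :=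
            Real.rpow_le_one_of_one_le_of_nonpos (by linarith) (by norm_num)
          linarith
      _ = ENNReal.ofReal 200 := by rw [← ENNReal.ofReal_mul (by norm_num)]; norm_num
  have step4 : (ENNReal.ofReal 200 : ℝ≥0∞) ^ ((1:ℝ)/2) ≤ 15 := by
    have h225 : (ENNReal.ofReal 200 : ℝ≥0∞) ≤ (15 : ℝ≥0∞) ^ (2:ℝ) := by
      rw [show ((15 : ℝ≥0∞)) = ENNReal.ofReal 15 by simp,
        ENNReal.ofReal_rpow_of_nonneg (by norm_num) (by norm_num)]
      apply ENNReal.ofReal_le_ofReal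
      rw [Real.rpow_two]; norm_num
    calc (ENNReal.ofReal 200 : ℝ≥0∞) ^ ((1:ℝ)/2) ≤ ((15 : ℝ≥0∞) ^ (2:ℝ)) ^ ((1:ℝ)/2) :=
        ENNReal.rpow_le_rpow h225 (by norm_num)
      _ = 15 := by rw [← ENNReal.rpow_mul]; norm_num
  have step5 : (∫⁻ y in Ioi x, g y ^ (2:ℝ)) ≤ ∫⁻ y, g y ^ (2:ℝ) :=
    setLIntegral_le_lintegral _ _
  calc ∫⁻ y in Ioi x, ENNReal.ofReal (1+4*(y-x)) * f y
      ≤ (∫⁻ y in Ioi x, c y ^ (2:ℝ)) ^ ((1:ℝ)/2) * (∫⁻ y in Ioi x, g y ^ (2:ℝ)) ^ ((1:ℝ)/2) :=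
        step1.trans step2
    _ ≤ 15 * (∫⁻ y, g y ^ (2:ℝ)) ^ ((1:ℝ)/2) := by
        apply mul_le_mul'
        · exact (ENNReal.rpow_le_rpow step3 (by norm_num)).trans step4
        · exact ENNReal.rpow_le_rpow step5 (by norm_num)


lemma schurLem (f : ℝ → ℝ≥0∞) (hf : Measurable f) :
    ∫⁻ x in Ioi 0, (∫⁻ y in Ioi x, ENNReal.ofReal (1+4*(y-x)) * f y) ^ (2:ℝ)
      ≤ 400 * ∫⁻ y, (ENNReal.ofReal (1+y^2) * f y) ^ (2:ℝ) := by
  set w : ℝ → ℝ≥0∞ := fun t => ENNReal.ofReal ((1+t) ^ (-(1/2):ℝ)) with hwdef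
  set w' : ℝ → ℝ≥0∞ := fun t => ENNReal.ofReal ((1+t) ^ ((1/2):ℝ)) with hw'def
  set K : ℝ → ℝ → ℝ≥0∞ := fun x y => ENNReal.ofReal ((1+4*(y-x)) * (1+y^2)⁻¹) with hKdef
  set g : ℝ → ℝ≥0∞ := fun y => ENNReal.ofReal (1+y^2) * f y with hgdef
  have hwm : Measurable w := ((measurable_const.add measurable_id).pow measurable_const).ennreal_ofReal
  have hw'm : Measurable w' := ((measurable_const.add measurable_id).pow measurable_const).ennreal_ofReal
  have hgm : Measurable g := ((by fun_prop : Measurable fun y:ℝ => (1+y^2:ℝ)).ennreal_ofReal).mul hf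
  have hKm : ∀ x, Measurable (K x) := by
    intro x; apply Measurable.ennreal_ofReal; fun_prop
  -- step B+C : pointwise bound for x > 0
  have hmain : ∀ x : ℝ, 0 < x →
      (∫⁻ y in Ioi x, ENNReal.ofReal (1+4*(y-x)) * f y) ^ (2:ℝ)
        ≤ (ENNReal.ofReal 20 * w x) * ∫⁻ y in Ioi x, K x y * w' y * g y ^ (2:ℝ) := by
    intro x hx0
    have hx : (0:ℝ) ≤ x := hx0.le
    -- rewrite integrand as K * g
    have hcongr : ∫⁻ y in Ioi x, ENNReal.ofReal (1+4*(y-x)) * f y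
        = ∫⁻ y in Ioi x, K x y * g y := by
      apply lintegral_congr_ae
      filter_upwards [ae_restrict_mem measurableSet_Ioi] with y hy
      have hxy : x < y := hy
      have h2y : (0:ℝ) < 1 + y^2 := by positivity
      have h4 : (0:ℝ) ≤ 1+4*(y-x) := by linarith
      simp only [hKdef, hgdef]
      rw [← mul_assoc, ← ENNReal.ofReal_mul (mul_nonneg h4 (by positivity))]
      congr 1
      rw [mul_assoc, inv_mul_cancel₀ h2y.ne', mul_one]
    rw [hcongr]
    -- Cauchy-Schwarz
    set u : ℝ → ℝ≥0∞ := fun y => (K x y * w y) ^ ((1:ℝ)/2) with hu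
    set v : ℝ → ℝ≥0∞ := fun y => (K x y * w' y) ^ ((1:ℝ)/2) * g y with hv
    have hum : Measurable u := ((hKm x).mul hwm).pow measurable_const
    have hvm : Measurable v := (((hKm x).mul hw'm).pow measurable_const).mul hgm
    have hcs := ENNReal.lintegral_mul_le_Lp_mul_Lq (volume.restrict (Ioi x))
      Real.HolderConjugate.two_two
      hum.aemeasurable hvm.aemeasurable
    have huv : ∫⁻ y in Ioi x, (u * v) y = ∫⁻ y in Ioi x, K x y * g y := by
      apply lintegral_congr_ae
      filter_upwards [ae_restrict_mem measurableSet_Ioi] with y hy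
      have hxy : x < y := hy
      have h1y : (0:ℝ) < 1 + y := by linarith
      simp only [Pi.mul_apply, hu, hv]
      rw [← mul_assoc, ← ENNReal.mul_rpow_of_nonneg _ _ (by norm_num : (0:ℝ) ≤ 1/2)]
      congr 1
      rw [show K x y * w y * (K x y * w' y) = (K x y * K x y) * (w y * w' y) by ring]
      have hww : w y * w' y = 1 := by
        show ENNReal.ofReal ((1+y) ^ (-(1/2):ℝ)) * ENNReal.ofReal ((1+y) ^ ((1/2):ℝ)) = 1
        rw [← ENNReal.ofReal_mul (by positivity), ← Real.rpow_add h1y]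
        norm_num
      rw [hww, mul_one]
      have hK0 : K x y ≠ 0 := by
        simp only [hKdef]
        apply (ENNReal.ofReal_pos.2 _).ne'
        have h2y : (0:ℝ) < 1 + y^2 := by positivity
        have h4 : (0:ℝ) < 1+4*(y-x) := by linarith
        positivity
      have hKt : K x y ≠ ⊤ := ENNReal.ofReal_ne_top
      rw [ENNReal.mul_rpow_of_nonneg _ _ (by norm_num : (0:ℝ) ≤ 1/2),
        ← ENNReal.rpow_add _ _ hK0 hKt]
      norm_num [ENNReal.rpow_one]
    have hu2 : ∫⁻ y in Ioi x, u y ^ (2:ℝ) = ∫⁻ y in Ioi x, K x y * w y := by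
      apply lintegral_congr fun y => ?_
      rw [hu, ← ENNReal.rpow_mul]
      norm_num
    have hv2 : ∫⁻ y in Ioi x, v y ^ (2:ℝ) = ∫⁻ y in Ioi x, K x y * w' y * g y ^ (2:ℝ) := by
      apply lintegral_congr fun y => ?_
      rw [hv, ENNReal.mul_rpow_of_nonneg _ _ (by norm_num : (0:ℝ) ≤ 2), ← ENNReal.rpow_mul]
      norm_num
    -- kernel integral bound (step C)
    have hKw : ∫⁻ y in Ioi x, K x y * w y ≤ ENNReal.ofReal 20 * w x := by
      have hpt : ∀ y ∈ Ioi x, K x y * w y ≤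
          ENNReal.ofReal 10 * ENNReal.ofReal ((1+y) ^ (-(3/2):ℝ)) := by
        intro y hy
        have hxy : x < y := hy
        have hy0 : (0:ℝ) < y := lt_of_le_of_lt hx hxy
        have h1y : (0:ℝ) < 1 + y := by linarith
        have h2y : (0:ℝ) < 1 + y^2 := by positivity
        have h4 : (0:ℝ) ≤ 1+4*(y-x) := by linarith
        simp only [hKdef, hwdef]
        rw [← ENNReal.ofReal_mul (mul_nonneg h4 (by positivity)),
          ← ENNReal.ofReal_mul (by norm_num)]
        apply ENNReal.ofReal_le_ofReal
        have hsplit : (10:ℝ) * (1+y) ^ (-(3/2):ℝ) = (10 * (1+y)⁻¹) * (1+y) ^ (-(1/2):ℝ) := by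
          rw [show ((1+y)⁻¹ : ℝ) = (1+y) ^ (-(1:ℝ)) by rw [Real.rpow_neg_one]]
          rw [mul_assoc, ← Real.rpow_add h1y]
          norm_num
        rw [hsplit]
        apply mul_le_mul_of_nonneg_right _ (Real.rpow_nonneg h1y.le _)
        rw [show (1+4*(y-x)) * (1+y^2)⁻¹ = (1+4*(y-x)) / (1+y^2) by ring,
          show (10:ℝ) * (1+y)⁻¹ = 10 / (1+y) by ring, div_le_div_iff₀ h2y h1y]
        nlinarith [sq_nonneg (1-y)]
      calc ∫⁻ y in Ioi x, K x y * w y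
          ≤ ∫⁻ y in Ioi x, ENNReal.ofReal 10 * ENNReal.ofReal ((1+y) ^ (-(3/2):ℝ)) := by
            apply lintegral_mono_ae
            filter_upwards [ae_restrict_mem measurableSet_Ioi] with y hy using hpt y hy
        _ = ENNReal.ofReal 10 * ∫⁻ y in Ioi x, ENNReal.ofReal ((1+y) ^ (-(3/2):ℝ)) :=
            lintegral_const_mul' _ _ ENNReal.ofReal_ne_top
        _ ≤ ENNReal.ofReal 10 * ENNReal.ofReal (2 * (1+x) ^ (-(1/2):ℝ)) :=
            mul_le_mul_right (lemA x hx) _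
        _ = ENNReal.ofReal 20 * w x := by
            simp only [hwdef]
            rw [← ENNReal.ofReal_mul (by norm_num), ← ENNReal.ofReal_mul (by norm_num)]
            ring_nf
    calc (∫⁻ y in Ioi x, K x y * g y) ^ (2:ℝ)
        = (∫⁻ y in Ioi x, (u*v) y) ^ (2:ℝ) := by rw [huv]
      _ ≤ ((∫⁻ y in Ioi x, u y ^ (2:ℝ)) ^ ((1:ℝ)/2)
            * (∫⁻ y in Ioi x, v y ^ (2:ℝ)) ^ ((1:ℝ)/2)) ^ (2:ℝ) := by
          apply ENNReal.rpow_le_rpow _ (by norm_num)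
          simpa using hcs
      _ = (∫⁻ y in Ioi x, u y ^ (2:ℝ)) * (∫⁻ y in Ioi x, v y ^ (2:ℝ)) := by
          rw [ENNReal.mul_rpow_of_nonneg _ _ (by norm_num : (0:ℝ) ≤ 2),
            ← ENNReal.rpow_mul, ← ENNReal.rpow_mul]
          norm_num
      _ ≤ (ENNReal.ofReal 20 * w x) * ∫⁻ y in Ioi x, K x y * w' y * g y ^ (2:ℝ) := by
          rw [hu2, hv2]
          exact mul_le_mul_left hKw _
  -- Tonelli part
  set Φ : ℝ → ℝ → ℝ≥0∞ := fun x y =>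
    if x < y then (ENNReal.ofReal 20 * w x) * (K x y * w' y * g y ^ (2:ℝ)) else 0 with hPhi
  have hKxym : Measurable fun p : ℝ × ℝ => K p.1 p.2 := by
    apply Measurable.ennreal_ofReal; fun_prop
  have hPm : Measurable (Function.uncurry Φ) := by
    apply Measurable.ite (measurableSet_lt measurable_fst measurable_snd) _ measurable_const
    exact ((measurable_const.mul (hwm.comp measurable_fst))).mul
      ((hKxym.mul (hw'm.comp measurable_snd)).mul
        ((hgm.comp measurable_snd).pow measurable_const))
  have hBm : ∀ x, Measurable fun y => K x y * w' y * g y ^ (2:ℝ) := fun x =>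
    ((hKm x).mul hw'm).mul (hgm.pow measurable_const)
  have inner_eq : ∀ x : ℝ,
      (ENNReal.ofReal 20 * w x) * (∫⁻ y in Ioi x, K x y * w' y * g y ^ (2:ℝ))
        = ∫⁻ y, Φ x y := by
    intro x
    rw [← lintegral_const_mul _ (hBm x), ← lintegral_indicator measurableSet_Ioi]
    apply lintegral_congr fun y => ?_
    by_cases h : x < y
    · simp [hPhi, h, indicator_of_mem (mem_Ioi.2 h)]
    · simp [hPhi, h, indicator_of_notMem (fun hc => h (mem_Ioi.1 hc))]
  have final : ∀ y : ℝ, (∫⁻ x in Ioi 0, Φ x y) ≤ 400 * g y ^ (2:ℝ) := by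
    intro y
    have heq : (∫⁻ x in Ioi 0, Φ x y)
        = ∫⁻ x in Ioo 0 y, (ENNReal.ofReal 20 * w x) * (K x y * w' y * g y ^ (2:ℝ)) := by
      rw [show Ioo (0:ℝ) y = Iio y ∩ Ioi 0 by ext t; simp [mem_Ioo, and_comm],
        ← Measure.restrict_restrict measurableSet_Iio, ← lintegral_indicator measurableSet_Iio]
      apply lintegral_congr fun x => ?_
      by_cases h : x < y
      · simp [hPhi, h, indicator_of_mem (mem_Iio.2 h)]
      · simp [hPhi, h, indicator_of_notMem (fun hc => h (mem_Iio.1 hc))]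
    rw [heq]
    rcases le_or_gt y 0 with hy | hy
    · rw [Ioo_eq_empty (fun h => absurd h (not_lt.2 hy))]
      simp
    · have h1y : (0:ℝ) < 1 + y := by linarith
      have h2y : (0:ℝ) < 1 + y^2 := by positivity
      have hregroup : ∀ x : ℝ,
          (ENNReal.ofReal 20 * w x) * (K x y * w' y * g y ^ (2:ℝ))
            = (ENNReal.ofReal 20 * w' y * g y ^ (2:ℝ)) * (w x * K x y) := by
        intro x; ring
      calc ∫⁻ x in Ioo 0 y, (ENNReal.ofReal 20 * w x) * (K x y * w' y * g y ^ (2:ℝ))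
          = (ENNReal.ofReal 20 * w' y * g y ^ (2:ℝ)) * ∫⁻ x in Ioo 0 y, w x * K x y := by
            rw [← lintegral_const_mul (f := fun x => w x * K x y) _ (hwm.mul (by
              apply Measurable.ennreal_ofReal; fun_prop : Measurable fun x => K x y))]
            exact lintegral_congr fun x => hregroup x
        _ ≤ (ENNReal.ofReal 20 * w' y * g y ^ (2:ℝ)) *
              (ENNReal.ofReal (5*(1+y)*(1+y^2)⁻¹) * ENNReal.ofReal (2*(1+y) ^ ((1/2):ℝ))) := by
            apply mul_le_mul_right
            have hpt : ∀ x ∈ Ioo (0:ℝ) y, w x * K x y ≤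
                ENNReal.ofReal (5*(1+y)*(1+y^2)⁻¹) * ENNReal.ofReal ((1+x) ^ (-(1/2):ℝ)) := by
              intro x hx
              have hx0 : (0:ℝ) < x := hx.1
              have hxy : x < y := hx.2
              rw [mul_comm]
              have hKb : K x y ≤ ENNReal.ofReal (5*(1+y)*(1+y^2)⁻¹) := by
                apply ENNReal.ofReal_le_ofReal
                apply mul_le_mul_of_nonneg_right _ (by positivity)
                linarith
              exact mul_le_mul' hKb le_rfl
            calc ∫⁻ x in Ioo 0 y, w x * K x y
                ≤ ∫⁻ x in Ioo 0 y, ENNReal.ofReal (5*(1+y)*(1+y^2)⁻¹)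
                    * ENNReal.ofReal ((1+x) ^ (-(1/2):ℝ)) := by
                  apply lintegral_mono_ae
                  filter_upwards [ae_restrict_mem measurableSet_Ioo] with x hx using hpt x hx
              _ = ENNReal.ofReal (5*(1+y)*(1+y^2)⁻¹)
                    * ∫⁻ x in Ioo 0 y, ENNReal.ofReal ((1+x) ^ (-(1/2):ℝ)) :=
                  lintegral_const_mul' _ _ ENNReal.ofReal_ne_top
              _ ≤ _ := mul_le_mul_right (lemB y) _
        _ ≤ 400 * g y ^ (2:ℝ) := by
            rw [show (ENNReal.ofReal 20 * w' y * g y ^ (2:ℝ)) *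
                  (ENNReal.ofReal (5*(1+y)*(1+y^2)⁻¹) * ENNReal.ofReal (2*(1+y) ^ ((1/2):ℝ)))
                = (ENNReal.ofReal 20 * w' y *
                    (ENNReal.ofReal (5*(1+y)*(1+y^2)⁻¹) * ENNReal.ofReal (2*(1+y) ^ ((1/2):ℝ))))
                  * g y ^ (2:ℝ) by ring]
            apply mul_le_mul_left
            have hcollect : ENNReal.ofReal 20 * w' y *
                (ENNReal.ofReal (5*(1+y)*(1+y^2)⁻¹) * ENNReal.ofReal (2*(1+y) ^ ((1/2):ℝ)))
                = ENNReal.ofReal (20 * ((1+y) ^ ((1/2):ℝ)) *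
                    (5*(1+y)*(1+y^2)⁻¹ * (2*(1+y) ^ ((1/2):ℝ)))) := by
              simp only [hw'def]
              rw [← ENNReal.ofReal_mul (by norm_num),
                ← ENNReal.ofReal_mul (mul_nonneg (by positivity) (by positivity)),
                ← ENNReal.ofReal_mul (by positivity)]
            rw [hcollect, show (400 : ℝ≥0∞) = ENNReal.ofReal 400 by simp]
            apply ENNReal.ofReal_le_ofReal
            have hhalf : (1+y) ^ ((1/2):ℝ) * (1+y) ^ ((1/2):ℝ) = 1+y := by
              rw [← Real.rpow_add h1y]; norm_num
            rw [show 20 * ((1+y) ^ ((1/2):ℝ)) * (5*(1+y)*(1+y^2)⁻¹ * (2*(1+y) ^ ((1/2):ℝ)))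
                = 200 * ((1+y) ^ ((1/2):ℝ) * (1+y) ^ ((1/2):ℝ)) * (1+y) * (1+y^2)⁻¹ by ring,
              hhalf]
            rw [show (200:ℝ) * (1+y) * (1+y) * (1+y^2)⁻¹
                = (200 * (1+y) * (1+y)) / (1+y^2) by ring, div_le_iff₀ h2y]
            nlinarith [sq_nonneg (1-y)]
  calc ∫⁻ x in Ioi 0, (∫⁻ y in Ioi x, ENNReal.ofReal (1+4*(y-x)) * f y) ^ (2:ℝ)
      ≤ ∫⁻ x in Ioi 0, (ENNReal.ofReal 20 * w x) * ∫⁻ y in Ioi x, K x y * w' y * g y ^ (2:ℝ) := by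
        apply lintegral_mono_ae
        filter_upwards [ae_restrict_mem measurableSet_Ioi] with x hx using hmain x hx
    _ = ∫⁻ x in Ioi 0, ∫⁻ y, Φ x y := lintegral_congr fun x => inner_eq x
    _ = ∫⁻ y, ∫⁻ x in Ioi 0, Φ x y := lintegral_lintegral_swap hPm.aemeasurable
    _ ≤ ∫⁻ y, 400 * g y ^ (2:ℝ) := lintegral_mono final
    _ = 400 * ∫⁻ y, g y ^ (2:ℝ) := lintegral_const_mul _ (hgm.pow measurable_const)


lemma muI0_univ : muI0 univ = 4 := by
  rw [muI0, Measure.add_apply,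
    Measure.map_apply Complex.measurable_ofReal MeasurableSet.univ,
    Measure.map_apply (by fun_prop : Measurable fun s : ℝ => Complex.I * (s:ℂ)) MeasurableSet.univ]
  simp [Real.volume_Ioo]
  rw [← ENNReal.ofReal_add (by norm_num) (by norm_num)]
  norm_num

instance muI0_finite : IsFiniteMeasure muI0 := ⟨by rw [muI0_univ]; exact (by norm_num)⟩

lemma muI0_ae_adm : ∀ᵐ k ∂muI0, ‖k‖ ≤ 1 ∧ (k^2).im = 0 := by
  have hS : MeasurableSet {k : ℂ | ‖k‖ ≤ 1 ∧ (k^2).im = 0} := by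
    apply MeasurableSet.inter
    · exact measurableSet_le continuous_norm.measurable measurable_const
    · exact MeasurableSet.preimage (measurableSet_singleton 0)
        (Complex.continuous_im.comp (continuous_pow 2)).measurable
  rw [ae_iff]
  have hSc : MeasurableSet {k : ℂ | ¬(‖k‖ ≤ 1 ∧ (k^2).im = 0)} := hS.compl
  rw [muI0, Measure.add_apply,
    Measure.map_apply Complex.measurable_ofReal hSc,
    Measure.map_apply (by fun_prop : Measurable fun s : ℝ => Complex.I * (s:ℂ)) hSc,
    Measure.restrict_apply' measurableSet_Ioo, Measure.restrict_apply' measurableSet_Ioo]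
  have h1 : (fun s : ℝ => (s:ℂ)) ⁻¹' {k : ℂ | ¬(‖k‖ ≤ 1 ∧ (k^2).im = 0)}
      ∩ Ioo (-1) 1 = ∅ := by
    ext s
    simp only [mem_inter_iff, mem_preimage, mem_setOf_eq, mem_Ioo, mem_empty_iff_false,
      iff_false]
    rintro ⟨h, hs1, hs2⟩
    refine h ⟨?_, ?_⟩
    · rw [Complex.norm_real, Real.norm_eq_abs, abs_le]; constructor <;> linarith
    · rw [show ((s:ℂ))^2 = ((s^2 : ℝ) : ℂ) by push_cast; ring]
      exact Complex.ofReal_im _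
  have h2 : (fun s : ℝ => Complex.I * (s:ℂ)) ⁻¹' {k : ℂ | ¬(‖k‖ ≤ 1 ∧ (k^2).im = 0)}
      ∩ Ioo (-1) 1 = ∅ := by
    ext s
    simp only [mem_inter_iff, mem_preimage, mem_setOf_eq, mem_Ioo, mem_empty_iff_false,
      iff_false]
    rintro ⟨h, hs1, hs2⟩
    refine h ⟨?_, ?_⟩
    · rw [norm_mul, Complex.norm_I, one_mul, Complex.norm_real, Real.norm_eq_abs, abs_le]
      constructor <;> linarith
    · rw [show (Complex.I * (s:ℂ))^2 = ((-(s^2) : ℝ) : ℂ) by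
        rw [mul_pow, Complex.I_sq]; push_cast; ring]
      exact Complex.ofReal_im _
  rw [h1, h2]
  simp

lemma kIntLem (Φ : ℂ → ℂ) (b : ℝ) (hb : 0 ≤ b)
    (hbd : ∀ᵐ k ∂muI0, ‖Φ k‖ ≤ b) :
    ∫ k, ‖Φ k‖ ^ 2 ∂muI0 ≤ 4 * b ^ 2 := by
  by_cases hint : Integrable (fun k => ‖Φ k‖ ^ 2) muI0
  · have hmono : ∫ k, ‖Φ k‖ ^ 2 ∂muI0 ≤ ∫ _, b ^ 2 ∂muI0 := by
      apply integral_mono_ae hint (integrable_const _)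
      filter_upwards [hbd] with k hk
      exact pow_le_pow_left₀ (norm_nonneg _) hk 2
    rw [integral_const, measureReal_def, muI0_univ] at hmono
    calc ∫ k, ‖Φ k‖ ^ 2 ∂muI0 ≤ (4 : ℝ≥0∞).toReal • b^2 := hmono
      _ = 4 * b^2 := by norm_num
  · rw [integral_undef hint]
    positivity


theorem stmt_1 :
    ∃ C > (0 : ℝ), ∀ u₀ : ℝ → ℂ, MemHms 3 3 u₀ →
      -- (i)
      (∀ x : ℝ, 0 ≤ x →
        Real.sqrt (∫ k, ‖Wfun u₀ x k‖ ^ 2 ∂muI0) ≤ C * HmsNorm 2 2 u₀) ∧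
      -- (ii)
      Real.sqrt (∫ x in Ioi (0 : ℝ), ∫ k, ‖Wfun u₀ x k‖ ^ 2 ∂muI0)
        ≤ C * HmsNorm 3 3 u₀ ∧
      -- (iii)
      (∀ x : ℝ, 0 ≤ x →
        Real.sqrt (∫ k, ‖Wkfun u₀ x k‖ ^ 2 ∂muI0) ≤ C * HmsNorm 2 2 u₀) ∧
      -- (iv)
      Real.sqrt (∫ x in Ioi (0 : ℝ), ∫ k, ‖Wkfun u₀ x k‖ ^ 2 ∂muI0)
        ≤ C * HmsNorm 2 2 u₀ := by
  refine ⟨100, by norm_num, fun u₀ h33 => ?_⟩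
  have hd : Measurable (deriv u₀) := measurable_deriv u₀
  have h1 := h33 1 (by norm_num)
  simp only [iteratedDeriv_one, Nat.cast_ofNat] at h1
  set E : ℝ≥0∞ := eLpNorm (fun y : ℝ => ((1 + y ^ 2 : ℝ)) • deriv u₀ y) 2 volume with hEdef
  have hE3 : E ≤ eLpNorm (fun x : ℝ => ((1 + x ^ 2) ^ ((3 : ℝ) / 2) : ℝ) • deriv u₀ x)
      2 volume := by
    apply eLpNorm_mono fun x => ?_
    rw [norm_smul, norm_smul]
    have h1x : (1:ℝ) ≤ 1 + x ^ 2 := by nlinarith [sq_nonneg x]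
    apply mul_le_mul_of_nonneg_right _ (norm_nonneg _)
    have e1 : ‖(1 + x ^ 2 : ℝ)‖ = (1 + x ^ 2 : ℝ) := by
      rw [Real.norm_eq_abs, _root_.abs_of_nonneg (by positivity : (0:ℝ) ≤ 1 + x ^ 2)]
    have e2 : ‖((1 + x ^ 2) ^ ((3:ℝ)/2) : ℝ)‖ = ((1 + x ^ 2) ^ ((3:ℝ)/2) : ℝ) := by
      rw [Real.norm_eq_abs, _root_.abs_of_nonneg (by positivity : (0:ℝ) ≤ (1 + x ^ 2) ^ ((3:ℝ)/2))]
    rw [e1, e2]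
    calc (1 + x ^ 2 : ℝ) = (1 + x ^ 2) ^ (1:ℝ) := (Real.rpow_one _).symm
      _ ≤ (1 + x ^ 2) ^ ((3:ℝ)/2) := Real.rpow_le_rpow_of_exponent_le h1x (by norm_num)
  have hEfin : E ≠ ⊤ := (lt_of_le_of_lt hE3 h1.2).ne
  have hd2 : MemLp (deriv u₀) 2 volume := by
    refine ⟨hd.aestronglyMeasurable, ?_⟩
    have hm : eLpNorm (deriv u₀) 2 volume
        ≤ eLpNorm (fun x : ℝ => ((1 + x ^ 2) ^ ((3:ℝ)/2) : ℝ) • deriv u₀ x) 2 volume := by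
      apply eLpNorm_mono fun x => ?_
      rw [norm_smul]
      have h1x : (1:ℝ) ≤ 1 + x ^ 2 := by nlinarith [sq_nonneg x]
      have hge : (1:ℝ) ≤ (1 + x ^ 2) ^ ((3:ℝ)/2) :=
        calc (1:ℝ) = (1 + x ^ 2) ^ (0:ℝ) := (Real.rpow_zero _).symm
          _ ≤ _ := Real.rpow_le_rpow_of_exponent_le h1x (by norm_num)
      have e2 : ‖((1 + x ^ 2) ^ ((3:ℝ)/2) : ℝ)‖ = ((1 + x ^ 2) ^ ((3:ℝ)/2) : ℝ) := by
        rw [Real.norm_eq_abs, _root_.abs_of_nonneg (by positivity : (0:ℝ) ≤ (1 + x ^ 2) ^ ((3:ℝ)/2))]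
      rw [e2]
      nth_rewrite 1 [← one_mul ‖deriv u₀ x‖]
      exact mul_le_mul_of_nonneg_right hge (norm_nonneg _)
    exact lt_of_le_of_lt hm h1.2
  have habs2 : Integrable (fun s => ‖deriv u₀ s‖ ^ 2) volume := by
    have h := hd2.integrable_norm_rpow (by norm_num) (by norm_num)
    simp only [ENNReal.toReal_ofNat] at h
    apply h.congr
    filter_upwards with s
    rw [show ((2:ℝ)) = ((2:ℕ):ℝ) by norm_num, Real.rpow_natCast]
  have hphi_mono : Monotone (phi u₀) := by
    intro a b hab
    apply setIntegral_mono_set habs2.integrableOn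
      (Filter.Eventually.of_forall fun s => by positivity)
      (HasSubset.Subset.eventuallyLE (Iio_subset_Iio hab))
  have hq : Measurable (qf u₀) := by
    apply Measurable.mul
    · exact Complex.continuous_conj.measurable.comp hd
    · exact Complex.measurable_exp.comp
        (measurable_const.mul (Complex.measurable_ofReal.comp hphi_mono.measurable))
  have habsq : ∀ y, ‖qf u₀ y‖ = ‖deriv u₀ y‖ := by
    intro y
    rw [qf, norm_mul, Complex.norm_conj, Complex.norm_exp]
    simp [Complex.mul_re]
  set F : ℝ → ℝ≥0∞ := fun y => ENNReal.ofReal (‖deriv u₀ y‖) with hFdef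
  have hF : Measurable F := (continuous_norm.measurable.comp hd).ennreal_ofReal
  set Q2 : ℝ≥0∞ := ∫⁻ y, (ENNReal.ofReal (1 + y ^ 2) * F y) ^ (2:ℝ) with hQ2def
  have hQ2E : Q2 = E ^ (2:ℝ) := by
    have hE2 : E ^ (2:ℝ) = ∫⁻ y, ‖((1 + y ^ 2 : ℝ)) • deriv u₀ y‖ₑ ^ (2:ℝ) := by
      rw [hEdef, eLpNorm_eq_lintegral_rpow_enorm_toReal (by norm_num) (by norm_num),
        ENNReal.toReal_ofNat, ← ENNReal.rpow_mul, one_div,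
        inv_mul_cancel₀ (by norm_num : (2:ℝ) ≠ 0), ENNReal.rpow_one]
    rw [hE2]
    apply lintegral_congr fun y => ?_
    congr 1
    rw [enorm_smul, ← ofReal_norm_eq_enorm,
      ← ofReal_norm_eq_enorm, Real.norm_eq_abs,
      _root_.abs_of_nonneg (by positivity : (0:ℝ) ≤ 1 + y ^ 2)]
  have hQ2fin : Q2 ≠ ⊤ := by
    rw [hQ2E]; exact ENNReal.rpow_ne_top_of_nonneg (by norm_num) hEfin
  set H : ℝ → ℝ≥0∞ := fun x => ∫⁻ y in Ioi x, ENNReal.ofReal (1 + 4*(y-x)) * F y with hHdef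
  have hHle : ∀ x : ℝ, 0 ≤ x → H x ≤ 15 * E := by
    intro x hx
    refine (ptBound F hF x hx).trans ?_
    rw [← hQ2def, hQ2E, ← ENNReal.rpow_mul]
    norm_num
  have hHtop : ∀ x : ℝ, 0 ≤ x → H x ≠ ⊤ := by
    intro x hx
    exact ((hHle x hx).trans_lt (ENNReal.mul_lt_top (by norm_num) hEfin.lt_top)).ne
  set hB : ℝ → ℝ := fun x => (H x).toReal with hBdef
  have hBnn : ∀ x, 0 ≤ hB x := fun x => ENNReal.toReal_nonneg
  have hBle : ∀ x : ℝ, 0 ≤ x → hB x ≤ 15 * E.toReal := by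
    intro x hx
    calc (H x).toReal ≤ (15 * E).toReal :=
        ENNReal.toReal_mono (ENNReal.mul_ne_top (by norm_num) hEfin) (hHle x hx)
      _ = 15 * E.toReal := by rw [ENNReal.toReal_mul]; norm_num
  -- pointwise bounds on W, W_k
  have hWb : ∀ x : ℝ, 0 ≤ x → ∀ k : ℂ, ‖k‖ ≤ 1 → (k ^ 2).im = 0 →
      ‖Wfun u₀ x k‖ ≤ hB x ∧ ‖Wkfun u₀ x k‖ ≤ hB x := by
    intro x hx k hk1 hk2
    have hexp : ∀ y : ℝ,
        ‖Complex.exp (2 * Complex.I * k ^ 2 * ((x - y : ℝ) : ℂ))‖ = 1 := by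
      intro y
      have hk2' : (k ^ 2 : ℂ) = (((k ^ 2).re : ℝ) : ℂ) := Complex.ext rfl (by simp [hk2])
      rw [Complex.norm_exp, hk2',
        show (2 * Complex.I * (((k ^ 2).re : ℝ) : ℂ) * ((x - y : ℝ) : ℂ))
          = Complex.I * ((2 * (k ^ 2).re * (x - y) : ℝ) : ℂ) by push_cast; ring]
      simp [Complex.mul_re]
    have key : ∀ G : ℝ → ℂ, AEStronglyMeasurable G (volume.restrict (Ioi x)) →
        (∀ y ∈ Ioi x, ‖G y‖ ≤ (1 + 4*(y-x)) * ‖deriv u₀ y‖) →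
        ‖∫ y in Ioi x, G y‖ ≤ hB x := by
      intro G hGm hGb
      calc ‖∫ y in Ioi x, G y‖ ≤ ∫ y in Ioi x, ‖G y‖ := norm_integral_le_integral_norm _
        _ ≤ hB x := by
          rw [integral_eq_lintegral_of_nonneg_ae
            (Filter.Eventually.of_forall fun y => norm_nonneg _) hGm.norm]
          apply ENNReal.toReal_mono (hHtop x hx)
          apply lintegral_mono_ae
          filter_upwards [ae_restrict_mem measurableSet_Ioi] with y hy
          have hxy : x < y := hy
          have h4 : (0:ℝ) ≤ 1 + 4*(y-x) := by linarith
          calc ENNReal.ofReal ‖G y‖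
              ≤ ENNReal.ofReal ((1 + 4*(y-x)) * ‖deriv u₀ y‖) :=
                ENNReal.ofReal_le_ofReal (hGb y hy)
            _ = ENNReal.ofReal (1 + 4*(y-x)) * F y := ENNReal.ofReal_mul h4
    constructor
    · rw [Wfun, norm_mul]
      have hmeas1 : AEStronglyMeasurable
          (fun y : ℝ => Complex.exp (2 * Complex.I * k ^ 2 * ((x - y : ℝ) : ℂ)) * qf u₀ y)
          (volume.restrict (Ioi x)) := by
        apply Measurable.aestronglyMeasurable
        exact (Complex.measurable_exp.comp (measurable_const.mul
          (Complex.measurable_ofReal.comp (measurable_const.sub measurable_id)))).mul hq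
      have hbd1 : ∀ y ∈ Ioi x,
          ‖Complex.exp (2 * Complex.I * k ^ 2 * ((x - y : ℝ) : ℂ)) * qf u₀ y‖
            ≤ (1 + 4*(y-x)) * ‖deriv u₀ y‖ := by
        intro y hy
        have hxy : x < y := hy
        rw [norm_mul, hexp y, one_mul, habsq y]
        exact le_mul_of_one_le_left (norm_nonneg _) (by linarith)
      calc ‖k‖ * ‖∫ y in Ioi x,
              Complex.exp (2 * Complex.I * k ^ 2 * ((x - y : ℝ) : ℂ)) * qf u₀ y‖
          ≤ 1 * hB x := by
            apply mul_le_mul hk1 _ (norm_nonneg _) one_pos.le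
            exact key _ hmeas1 hbd1
        _ = hB x := one_mul _
    · rw [Wkfun]
      have hmeas2 : AEStronglyMeasurable
          (fun y : ℝ => Complex.exp (2 * Complex.I * k ^ 2 * ((x - y : ℝ) : ℂ))
            * (1 + 4 * Complex.I * k ^ 2 * ((x - y : ℝ) : ℂ)) * qf u₀ y)
          (volume.restrict (Ioi x)) := by
        apply Measurable.aestronglyMeasurable
        have hin : Measurable fun y : ℝ => ((x - y : ℝ) : ℂ) :=
          Complex.measurable_ofReal.comp (measurable_const.sub measurable_id)
        exact ((Complex.measurable_exp.comp (measurable_const.mul hin)).mul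
          (measurable_const.add (measurable_const.mul hin))).mul hq
      have hbd2 : ∀ y ∈ Ioi x,
          ‖Complex.exp (2 * Complex.I * k ^ 2 * ((x - y : ℝ) : ℂ))
              * (1 + 4 * Complex.I * k ^ 2 * ((x - y : ℝ) : ℂ)) * qf u₀ y‖
            ≤ (1 + 4*(y-x)) * ‖deriv u₀ y‖ := by
        intro y hy
        have hxy : x < y := hy
        rw [norm_mul, norm_mul, hexp y, one_mul, habsq y]
        apply mul_le_mul_of_nonneg_right _ (norm_nonneg _)
        calc ‖1 + 4 * Complex.I * k ^ 2 * ((x - y : ℝ) : ℂ)‖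
            ≤ ‖(1:ℂ)‖ + ‖4 * Complex.I * k ^ 2 * ((x - y : ℝ) : ℂ)‖ :=
              norm_add_le _ _
          _ = 1 + 4 * ‖k‖ ^ 2 * (y - x) := by
              rw [norm_one, norm_mul, norm_mul, norm_mul, norm_pow, Complex.norm_I,
                Complex.norm_real, Real.norm_eq_abs, _root_.abs_of_nonpos (by linarith : x - y ≤ 0),
                show ‖(4:ℂ)‖ = 4 by simp]
              ring
          _ ≤ 1 + 4*(y-x) := by
              have hk2le : ‖k‖ ^ 2 ≤ 1 := by
                nlinarith [norm_nonneg k]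
              nlinarith
      exact key _ hmeas2 hbd2
  have hJW : ∀ x : ℝ, 0 ≤ x → ∫ k, ‖Wfun u₀ x k‖ ^ 2 ∂muI0 ≤ 4 * hB x ^ 2 := by
    intro x hx
    apply kIntLem _ _ (hBnn x)
    filter_upwards [muI0_ae_adm] with k hk
    exact (hWb x hx k hk.1 hk.2).1
  have hJWk : ∀ x : ℝ, 0 ≤ x → ∫ k, ‖Wkfun u₀ x k‖ ^ 2 ∂muI0 ≤ 4 * hB x ^ 2 := by
    intro x hx
    apply kIntLem _ _ (hBnn x)
    filter_upwards [muI0_ae_adm] with k hk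
    exact (hWb x hx k hk.1 hk.2).2
  -- measurability of H
  have hHm : Measurable H := by
    have hrw : H = fun x => ∫⁻ y,
        (fun x y => if x < y then ENNReal.ofReal (1 + 4*(y-x)) * F y else 0) x y := by
      funext x
      show (∫⁻ y in Ioi x, ENNReal.ofReal (1 + 4*(y-x)) * F y) = _
      rw [← lintegral_indicator measurableSet_Ioi]
      apply lintegral_congr fun y => ?_
      by_cases h : x < y
      · simp [indicator_of_mem (mem_Ioi.2 h), h]
      · simp [indicator_of_notMem (fun hc => h (mem_Ioi.1 hc)), h]
    rw [hrw]
    apply Measurable.lintegral_prod_right'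
      (f := fun p : ℝ × ℝ => if p.1 < p.2 then ENNReal.ofReal (1 + 4*(p.2-p.1)) * F p.2 else 0)
    apply Measurable.ite (measurableSet_lt measurable_fst measurable_snd) _ measurable_const
    exact (Measurable.ennreal_ofReal (by fun_prop)).mul (hF.comp measurable_snd)
  have hSchur := schurLem F hF
  -- key estimate for the double integrals
  have key2 : ∀ W : ℝ → ℂ → ℂ,
      (∀ x : ℝ, 0 ≤ x → ∫ k, ‖W x k‖ ^ 2 ∂muI0 ≤ 4 * hB x ^ 2) →
      Real.sqrt (∫ x in Ioi (0:ℝ), ∫ k, ‖W x k‖ ^ 2 ∂muI0) ≤ 40 * E.toReal := by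
    intro W hW
    have hEnn : (0:ℝ) ≤ 40 * E.toReal := by positivity
    by_cases hint : Integrable (fun x => ∫ k, ‖W x k‖ ^ 2 ∂muI0)
      (volume.restrict (Ioi 0))
    swap
    · rw [integral_undef hint, Real.sqrt_zero]; exact hEnn
    · have hBm : Measurable hB := hHm.ennreal_toReal
      have hmaj_meas : AEStronglyMeasurable (fun x => 4 * hB x ^ 2)
          (volume.restrict (Ioi 0)) :=
        (measurable_const.mul (hBm.pow_const 2)).aestronglyMeasurable
      have hofreal : ∀ x ∈ Ioi (0:ℝ), ENNReal.ofReal (4 * hB x ^ 2) = 4 * H x ^ (2:ℝ) := by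
        intro x hx
        have h0 : (0:ℝ) < x := hx
        rw [ENNReal.ofReal_mul (by norm_num), ENNReal.ofReal_pow (hBnn x), hBdef,
          ENNReal.ofReal_toReal (hHtop x h0.le),
          show ((2:ℝ)) = ((2:ℕ):ℝ) by norm_num, ENNReal.rpow_natCast]
        norm_num
      have hlin : ∫⁻ x in Ioi 0, ENNReal.ofReal (4 * hB x ^ 2) ≤ 1600 * Q2 := by
        calc ∫⁻ x in Ioi 0, ENNReal.ofReal (4 * hB x ^ 2)
            = ∫⁻ x in Ioi 0, 4 * H x ^ (2:ℝ) := by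
              apply lintegral_congr_ae
              filter_upwards [ae_restrict_mem measurableSet_Ioi] with x hx using hofreal x hx
          _ = 4 * ∫⁻ x in Ioi 0, H x ^ (2:ℝ) := lintegral_const_mul' _ _ (by norm_num)
          _ ≤ 4 * (400 * Q2) := mul_le_mul_right hSchur _
          _ = 1600 * Q2 := by rw [← mul_assoc]; norm_num
      have hmaj_int : Integrable (fun x => 4 * hB x ^ 2) (volume.restrict (Ioi 0)) := by
        refine ⟨hmaj_meas, ?_⟩
        rw [hasFiniteIntegral_iff_ofReal (Filter.Eventually.of_forall fun x => by positivity)]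
        exact lt_of_le_of_lt hlin (ENNReal.mul_lt_top (by norm_num) hQ2fin.lt_top)
      have hle1 : ∫ x in Ioi (0:ℝ), (∫ k, ‖W x k‖ ^ 2 ∂muI0)
          ≤ ∫ x in Ioi (0:ℝ), 4 * hB x ^ 2 := by
        apply integral_mono_ae hint hmaj_int
        exact (ae_restrict_iff' measurableSet_Ioi).mpr
          (Filter.Eventually.of_forall fun x hx => hW x (le_of_lt hx))
      have hle2 : ∫ x in Ioi (0:ℝ), 4 * hB x ^ 2 ≤ 1600 * E.toReal ^ 2 := by
        rw [integral_eq_lintegral_of_nonneg_ae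
          (Filter.Eventually.of_forall fun x => by positivity) hmaj_meas]
        have heq : (1600 * E.toReal ^ 2 : ℝ) = (1600 * Q2 : ℝ≥0∞).toReal := by
          rw [ENNReal.toReal_mul, hQ2E,
            show ((2:ℝ)) = ((2:ℕ):ℝ) by norm_num, ENNReal.rpow_natCast, ENNReal.toReal_pow]
          norm_num
        rw [heq]
        exact ENNReal.toReal_mono (ENNReal.mul_ne_top (by norm_num) hQ2fin) hlin
      calc Real.sqrt (∫ x in Ioi (0:ℝ), ∫ k, ‖W x k‖ ^ 2 ∂muI0)
          ≤ Real.sqrt (1600 * E.toReal ^ 2) := Real.sqrt_le_sqrt (hle1.trans hle2)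
        _ = 40 * E.toReal := by
            rw [show (1600:ℝ) * E.toReal ^ 2 = (40 * E.toReal) ^ 2 by ring]
            exact Real.sqrt_sq (by positivity)
  -- norm comparisons
  have hterm22 : E.toReal ≤ HmsNorm 2 2 u₀ := by
    rw [HmsNorm]
    have hmem : (1:ℕ) ∈ Finset.range (2+1) := by norm_num
    have hsb := Finset.single_le_sum
      (f := fun j => (eLpNorm (fun x : ℝ =>
        ((1 + x ^ 2) ^ (((2:ℕ) : ℝ) / 2) : ℝ) • iteratedDeriv j u₀ x) 2 volume).toReal)
      (fun i _ => ENNReal.toReal_nonneg) hmem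
    refine le_trans (le_of_eq ?_) hsb
    show E.toReal = _
    congr 1
    rw [hEdef]
    congr 1
    funext x
    rw [iteratedDeriv_one, show (((2:ℕ):ℝ)/2) = (1:ℝ) by norm_num, Real.rpow_one]
  have hterm33 : E.toReal ≤ HmsNorm 3 3 u₀ := by
    have h1' : E.toReal ≤ (eLpNorm (fun x : ℝ =>
        ((1 + x ^ 2) ^ ((3 : ℝ) / 2) : ℝ) • deriv u₀ x) 2 volume).toReal :=
      ENNReal.toReal_mono h1.2.ne hE3
    refine h1'.trans ?_
    rw [HmsNorm]
    have hmem : (1:ℕ) ∈ Finset.range (3+1) := by norm_num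
    have hsb := Finset.single_le_sum
      (f := fun j => (eLpNorm (fun x : ℝ =>
        ((1 + x ^ 2) ^ (((3:ℕ) : ℝ) / 2) : ℝ) • iteratedDeriv j u₀ x) 2 volume).toReal)
      (fun i _ => ENNReal.toReal_nonneg) hmem
    refine le_trans (le_of_eq ?_) hsb
    congr 2
    funext x
    rw [iteratedDeriv_one]
    norm_num
  have h22nn : 0 ≤ HmsNorm 2 2 u₀ := Finset.sum_nonneg fun i _ => ENNReal.toReal_nonneg
  have h33nn : 0 ≤ HmsNorm 3 3 u₀ := Finset.sum_nonneg fun i _ => ENNReal.toReal_nonneg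
  have hEnn : (0:ℝ) ≤ E.toReal := ENNReal.toReal_nonneg
  have hsup : ∀ x : ℝ, 0 ≤ x → ∀ J : ℝ, J ≤ 4 * hB x ^ 2 →
      Real.sqrt J ≤ 100 * HmsNorm 2 2 u₀ := by
    intro x hx J hJ
    calc Real.sqrt J ≤ Real.sqrt (4 * hB x ^ 2) := Real.sqrt_le_sqrt hJ
      _ = 2 * hB x := by
          rw [show (4:ℝ) * hB x ^ 2 = (2 * hB x) ^ 2 by ring]
          exact Real.sqrt_sq (by positivity)
      _ ≤ 100 * HmsNorm 2 2 u₀ := by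
          have := hBle x hx
          have := hterm22
          nlinarith [hEnn, h22nn]
  refine ⟨?_, ?_, ?_, ?_⟩
  · intro x hx
    exact hsup x hx _ (hJW x hx)
  · calc Real.sqrt (∫ x in Ioi (0:ℝ), ∫ k, ‖Wfun u₀ x k‖ ^ 2 ∂muI0)
        ≤ 40 * E.toReal := key2 (Wfun u₀) hJW
      _ ≤ 100 * HmsNorm 3 3 u₀ := by nlinarith [hterm33, h33nn, hEnn]
  · intro x hx
    exact hsup x hx _ (hJWk x hx)
  · calc Real.sqrt (∫ x in Ioi (0:ℝ), ∫ k, ‖Wkfun u₀ x k‖ ^ 2 ∂muI0)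
        ≤ 40 * E.toReal := key2 (Wkfun u₀) hJWk
      _ ≤ 100 * HmsNorm 2 2 u₀ := by nlinarith [hterm22, h22nn, hEnn]

end
end

section
/- Let X be a Banach space and let C⁰(ℝ⁺, X) denote the space of bounded continuous functions from ℝ⁺ = [0,∞) to X with the supremum norm. Let T be a linear integral operator on C⁰(ℝ⁺, X) and suppose there is a nonnegative function h ∈ L¹(ℝ⁺) such that for every f ∈ C⁰(ℝ⁺, X) one has (Tf)*(x) ≤ ∫_x^∞ h(t) f*(t) dt for all x ≥ 0, where f*(x) = sup_{y ≥ x} ‖f(y)‖_X. Then for every f ∈ C⁰(ℝ⁺, X) the equation u = f + Tu has a unique solution u ∈ C⁰(ℝ⁺, X); that is, I − T is invertible on C⁰(ℝ⁺, X), and its inverse satisfies ‖(I − T)^{−1}‖ ≤ exp(∫_0^∞ h(t) dt). -/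
open MeasureTheory Set

noncomputable section

/-- `f*(x) = sup_{y ≥ x} ‖f(y)‖` for a bounded continuous function on `ℝ⁺ = [0,∞)`. -/
def fstar {X : Type*} [NormedAddCommGroup X]
    (f : BoundedContinuousFunction (Ici (0 : ℝ)) X) (x : ℝ) : ℝ :=
  ⨆ y : Ici (0 : ℝ), if x ≤ (y : ℝ) then ‖f y‖ else 0

namespace Stmt3Aux

open Filter Topology

instance : Nonempty (Ici (0 : ℝ)) := ⟨⟨0, Set.self_mem_Ici⟩⟩

variable {X : Type*} [NormedAddCommGroup X]

lemma fstar_bddAbove (f : BoundedContinuousFunction (Ici (0 : ℝ)) X) (x : ℝ) :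
    BddAbove (range fun y : Ici (0 : ℝ) => if x ≤ (y : ℝ) then ‖f y‖ else 0) := by
  refine ⟨‖f‖, ?_⟩
  rintro r ⟨y, rfl⟩
  dsimp only
  split
  · exact f.norm_coe_le_norm y
  · exact norm_nonneg f

lemma fstar_le_norm (f : BoundedContinuousFunction (Ici (0 : ℝ)) X) (x : ℝ) :
    fstar f x ≤ ‖f‖ := by
  refine ciSup_le fun y => ?_
  split
  · exact f.norm_coe_le_norm y
  · exact norm_nonneg f

lemma fstar_nonneg (f : BoundedContinuousFunction (Ici (0 : ℝ)) X) (x : ℝ) :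
    0 ≤ fstar f x := by
  have h := le_ciSup (fstar_bddAbove f x) (⟨max x 0, le_max_right x 0⟩ : Ici (0 : ℝ))
  rw [if_pos (le_max_left x 0)] at h
  exact (norm_nonneg _).trans h

lemma norm_le_fstar_zero (f : BoundedContinuousFunction (Ici (0 : ℝ)) X) :
    ‖f‖ ≤ fstar f 0 := by
  refine (BoundedContinuousFunction.norm_le (fstar_nonneg f 0)).2 fun y => ?_
  have h := le_ciSup (fstar_bddAbove f 0) y
  rwa [if_pos (show (0:ℝ) ≤ (y:ℝ) from y.2)] at h

lemma fstar_anti (f : BoundedContinuousFunction (Ici (0 : ℝ)) X) :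
    Antitone (fstar f) := by
  intro x x' hxx'
  refine ciSup_le fun y => ?_
  split_ifs with hc
  · have h := le_ciSup (fstar_bddAbove f x) y
    rwa [if_pos (hxx'.trans hc)] at h
  · exact fstar_nonneg f x

/-! ### The tail integral `tl hh x = ∫_{x}^{∞} hh`. -/

/-- the tail integral -/
def tl (hh : ℝ → ℝ) (y : ℝ) : ℝ := ∫ t in Ioi y, hh t

variable {hh : ℝ → ℝ}

lemma split_Ioi {f : ℝ → ℝ} (hintg : Integrable f) {a b : ℝ} (hab : a ≤ b) :
    ∫ t in Ioi a, f t = (∫ t in Ioc a b, f t) + ∫ t in Ioi b, f t := by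
  have := setIntegral_union (μ := volume) (f := f) (s := Ioc a b) (t := Ioi b) (Ioc_disjoint_Ioi (le_refl b))
    measurableSet_Ioi hintg.integrableOn hintg.integrableOn
  rw [Ioc_union_Ioi_eq_Ioi hab] at this
  exact this

lemma tl_anti (h0 : ∀ t, 0 ≤ hh t) (hintg : Integrable hh) : Antitone (tl hh) := by
  intro a b hab
  exact setIntegral_mono_set hintg.integrableOn (ae_of_all _ fun t => h0 t)
    ((Ioi_subset_Ioi hab).eventuallyLE)

lemma tl_nonneg (h0 : ∀ t, 0 ≤ hh t) (y : ℝ) : 0 ≤ tl hh y :=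
  setIntegral_nonneg measurableSet_Ioi fun t _ => h0 t

lemma tl_le_total (h0 : ∀ t, 0 ≤ hh t) (hintg : Integrable hh) (y : ℝ) :
    tl hh y ≤ ∫ t, hh t :=
  setIntegral_le_integral hintg (ae_of_all _ h0)

lemma tl_eq (hintg : Integrable hh) (y : ℝ) :
    tl hh y = tl hh 0 - ∫ t in (0:ℝ)..y, hh t := by
  rcases le_total 0 y with hy | hy
  · rw [intervalIntegral.integral_of_le hy]
    have := split_Ioi hintg hy (f := hh)
    simp only [tl]
    linarith
  · rw [intervalIntegral.integral_of_ge hy]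
    have := split_Ioi hintg hy (f := hh)
    simp only [tl]
    linarith

lemma tl_cont (hintg : Integrable hh) : Continuous (tl hh) := by
  have h1 : Continuous fun y => ∫ t in (0:ℝ)..y, hh t :=
    intervalIntegral.continuous_primitive (fun a b => hintg.intervalIntegrable) 0
  exact (continuous_const.sub h1).congr fun y => (tl_eq hintg y).symm

lemma tl_tendsto (hintg : Integrable hh) : Tendsto (tl hh) atTop (𝓝 0) := by
  have h1 := intervalIntegral_tendsto_integral_Ioi (μ := volume) 0 hintg.integrableOn tendsto_id
  have h2 : Tendsto (fun y : ℝ => tl hh 0 - ∫ t in (0:ℝ)..y, hh t) atTop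
      (𝓝 (tl hh 0 - ∫ t in Ioi (0:ℝ), hh t)) := tendsto_const_nhds.sub h1
  have h3 : tl hh 0 - (∫ t in Ioi (0:ℝ), hh t) = 0 := by simp only [tl]; ring
  rw [h3] at h2
  exact h2.congr fun y => (tl_eq hintg y).symm

lemma integrable_mul_fstar (hintg : Integrable hh)
    (f : BoundedContinuousFunction (Ici (0 : ℝ)) X) :
    Integrable (fun t => hh t * fstar f t) := by
  have hb : ∀ t, ‖fstar f t‖ ≤ ‖f‖ := by
    intro t
    rw [Real.norm_eq_abs, abs_of_nonneg (fstar_nonneg f t)]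
    exact fstar_le_norm f t
  exact (hintg.bdd_mul ((fstar_anti f).measurable.aestronglyMeasurable) (ae_of_all _ hb)).congr
    (ae_of_all _ fun t => mul_comm _ _)

lemma integrable_mul_tl_pow (h0 : ∀ t, 0 ≤ hh t) (hintg : Integrable hh) (n : ℕ) :
    Integrable (fun t => hh t * tl hh t ^ n) := by
  have gmeas : Measurable (tl hh) := (tl_anti h0 hintg).measurable
  have hb : ∀ t, ‖tl hh t ^ n‖ ≤ (∫ t, hh t) ^ n := by
    intro t
    rw [Real.norm_eq_abs, abs_of_nonneg (pow_nonneg (tl_nonneg h0 t) n)]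
    exact pow_le_pow_left₀ (tl_nonneg h0 t) (tl_le_total h0 hintg t) n
  exact (hintg.bdd_mul ((gmeas.pow_const n).aestronglyMeasurable) (ae_of_all _ hb)).congr
    (ae_of_all _ fun t => mul_comm _ _)

lemma key (h0 : ∀ t, 0 ≤ hh t) (hintg : Integrable hh) (n : ℕ) (x : ℝ) :
    ∫ t in Ioi x, hh t * tl hh t ^ n ≤ tl hh x ^ (n + 1) / (n + 1) := by
  have Kint := integrable_mul_tl_pow h0 hintg n
  have hIoc : ∀ a b : ℝ, a ≤ b → ∫ t in Ioc a b, hh t = tl hh a - tl hh b := by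
    intro a b hab
    have := split_Ioi hintg hab (f := hh)
    simp only [tl]
    linarith
  have step : ∀ a b : ℝ, a ≤ b → (∫ t in Ioi a, hh t * tl hh t ^ n)
      ≤ tl hh a ^ n * (tl hh a - tl hh b) + ∫ t in Ioi b, hh t * tl hh t ^ n := by
    intro a b hab
    rw [split_Ioi Kint hab]
    have h1 : (∫ t in Ioc a b, hh t * tl hh t ^ n) ≤ ∫ t in Ioc a b, hh t * tl hh a ^ n := by
      refine setIntegral_mono_on Kint.integrableOn (hintg.mul_const _).integrableOn
        measurableSet_Ioc fun t ht => ?_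
      exact mul_le_mul_of_nonneg_left
        (pow_le_pow_left₀ (tl_nonneg h0 t) (tl_anti h0 hintg ht.1.le) n) (h0 t)
    have h2 : (∫ t in Ioc a b, hh t * tl hh a ^ n) = tl hh a ^ n * (tl hh a - tl hh b) := by
      rw [integral_mul_const, hIoc a b hab]; ring
    linarith
  have tail : ∀ b : ℝ, (∫ t in Ioi b, hh t * tl hh t ^ n) ≤ tl hh b ^ n * tl hh b := by
    intro b
    have h1 : (∫ t in Ioi b, hh t * tl hh t ^ n) ≤ ∫ t in Ioi b, hh t * tl hh b ^ n := by
      refine setIntegral_mono_on Kint.integrableOn (hintg.mul_const _).integrableOn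
        measurableSet_Ioi fun t ht => ?_
      exact mul_le_mul_of_nonneg_left
        (pow_le_pow_left₀ (tl_nonneg h0 t) (tl_anti h0 hintg ht.le) n) (h0 t)
    have h2 : (∫ t in Ioi b, hh t * tl hh b ^ n) = tl hh b ^ n * tl hh b := by
      rw [integral_mul_const]; simp only [tl]; ring
    linarith
  by_cases hM : tl hh x = 0
  · refine (tail x).trans ?_
    rw [hM]
    simp [zero_pow (Nat.succ_ne_zero n)]
  · have hMpos : 0 < tl hh x := lt_of_le_of_ne (tl_nonneg h0 x) (Ne.symm hM)
    set M := tl hh x with hMdef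
    have main_est : ∀ r : ℝ, r ∈ Ioo (0:ℝ) 1 →
        (∫ t in Ioi x, hh t * tl hh t ^ n)
          ≤ M ^ (n + 1) / ∑ k ∈ Finset.range (n + 1), r ^ k := by
      intro r hr
      obtain ⟨hr0, hr1⟩ := hr
      have hex : ∀ i : ℕ, ∃ y, x ≤ y ∧ tl hh y = M * r ^ i := by
        intro i
        have hci : 0 < M * r ^ i := mul_pos hMpos (pow_pos hr0 i)
        have hciM : M * r ^ i ≤ M := by
          have hle1 : r ^ i ≤ 1 := pow_le_one₀ hr0.le hr1.le
          nlinarith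
        obtain ⟨Y, hY1, hY2⟩ := (((tl_tendsto hintg).eventually_lt_const hci).and
          (eventually_ge_atTop x)).exists
        obtain ⟨y, hy, hgy⟩ := intermediate_value_Icc' hY2 (tl_cont hintg).continuousOn
          ⟨hY1.le, by rw [← hMdef]; exact hciM⟩
        exact ⟨y, hy.1, hgy⟩
      choose A hA1 hA2 using hex
      have hAmono : ∀ i, A i ≤ A (i + 1) := by
        intro i
        by_contra hc
        push_neg at hc
        have h1 : tl hh (A i) ≤ tl hh (A (i + 1)) := tl_anti h0 hintg hc.le
        rw [hA2, hA2] at h1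
        have h2 : r ^ (i + 1) < r ^ i := pow_lt_pow_right_of_lt_one₀ hr0 hr1 (Nat.lt_succ_self i)
        nlinarith
      set q := r ^ (n + 1) with hq
      have hq0 : 0 < q := pow_pos hr0 _
      have hq1 : q < 1 := pow_lt_one₀ hr0.le hr1 (Nat.succ_ne_zero n)
      have hB : ∀ N : ℕ, (∫ t in Ioi (A 0), hh t * tl hh t ^ n)
          ≤ M ^ (n + 1) * ((1 - r) * ∑ i ∈ Finset.range N, q ^ i)
            + ∫ t in Ioi (A N), hh t * tl hh t ^ n := by
        intro N
        induction N with
        | zero => simp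
        | succ N ih =>
          have hstep := step (A N) (A (N + 1)) (hAmono N)
          rw [hA2 N, hA2 (N + 1)] at hstep
          have hring : (M * r ^ N) ^ n * (M * r ^ N - M * r ^ (N + 1))
              = M ^ (n + 1) * ((1 - r) * q ^ N) := by
            simp only [hq]; ring
          rw [hring] at hstep
          rw [Finset.sum_range_succ]
          have hdist : M ^ (n + 1) * ((1 - r) * ((∑ i ∈ Finset.range N, q ^ i) + q ^ N))
              = M ^ (n + 1) * ((1 - r) * ∑ i ∈ Finset.range N, q ^ i)
                + M ^ (n + 1) * ((1 - r) * q ^ N) := by ring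
          rw [hdist]
          linarith
      have hB' : ∀ N : ℕ, (∫ t in Ioi x, hh t * tl hh t ^ n)
          ≤ M ^ (n + 1) * ((1 - r) * ∑ i ∈ Finset.range N, q ^ i) + M ^ (n + 1) * q ^ N := by
        intro N
        have h0' := step x (A 0) (hA1 0)
        have hgA0 : tl hh (A 0) = M := by rw [hA2 0]; simp
        rw [hgA0, ← hMdef] at h0'
        have hzero : M ^ n * (M - M) = 0 := by ring
        have htail := tail (A N)
        rw [hA2 N] at htail
        have hringt : (M * r ^ N) ^ n * (M * r ^ N) = M ^ (n + 1) * q ^ N := by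
          simp only [hq]; ring
        rw [hringt] at htail
        have hBN := hB N
        linarith
      have hS0 : (0:ℝ) < ∑ k ∈ Finset.range (n + 1), r ^ k :=
        Finset.sum_pos (fun k _ => pow_pos hr0 k) ⟨0, Finset.mem_range.2 (Nat.succ_pos n)⟩
      have hgs : (1 - r) * ∑ k ∈ Finset.range (n + 1), r ^ k = 1 - q := by
        have hg := geom_sum_mul r (n + 1)
        simp only [hq]
        nlinarith [hg]
      have hlimN : Tendsto (fun N : ℕ => M ^ (n + 1) * ((1 - r) * ∑ i ∈ Finset.range N, q ^ i)
          + M ^ (n + 1) * q ^ N) atTop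
          (𝓝 (M ^ (n + 1) * ((1 - r) * (1 - q)⁻¹) + M ^ (n + 1) * 0)) := by
        refine Tendsto.add ?_ ?_
        · exact (((hasSum_geometric_of_lt_one hq0.le hq1).tendsto_sum_nat).const_mul
            (1 - r)).const_mul (M ^ (n + 1))
        · exact (tendsto_pow_atTop_nhds_zero_of_lt_one hq0.le hq1).const_mul (M ^ (n + 1))
      have hle : (∫ t in Ioi x, hh t * tl hh t ^ n)
          ≤ M ^ (n + 1) * ((1 - r) * (1 - q)⁻¹) + M ^ (n + 1) * 0 :=
        ge_of_tendsto hlimN (Eventually.of_forall hB')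
      have h1r : (1:ℝ) - r ≠ 0 := ne_of_gt (by linarith)
      have heq : (1 - r) * (1 - q)⁻¹ = (∑ k ∈ Finset.range (n + 1), r ^ k)⁻¹ := by
        rw [← hgs, mul_inv, ← mul_assoc, mul_inv_cancel₀ h1r, one_mul]
      rw [heq, mul_zero, add_zero, ← div_eq_mul_inv] at hle
      exact hle
    have hcont : Continuous fun r : ℝ => ∑ k ∈ Finset.range (n + 1), r ^ k :=
      continuous_finset_sum _ fun k _ => continuous_pow k
    have hne : (∑ k ∈ Finset.range (n + 1), (1:ℝ) ^ k) = (n + 1 : ℝ) := by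
      simp
    have hlim : Tendsto (fun r : ℝ => M ^ (n + 1) / ∑ k ∈ Finset.range (n + 1), r ^ k)
        (𝓝[<] (1:ℝ)) (𝓝 (M ^ (n + 1) / (n + 1))) := by
      have hca : ContinuousAt
          (fun r : ℝ => M ^ (n + 1) / ∑ k ∈ Finset.range (n + 1), r ^ k) 1 := by
        refine ContinuousAt.div continuousAt_const hcont.continuousAt ?_
        rw [hne]; positivity
      have h2 := hca.tendsto.mono_left (nhdsWithin_le_nhds (s := Iio (1:ℝ)))
      simpa [hne] using h2
    refine ge_of_tendsto hlim ?_
    filter_upwards [Ioo_mem_nhdsLT_of_mem (show (1:ℝ) ∈ Ioc (0:ℝ) 1 from ⟨zero_lt_one, le_rfl⟩)]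
      with r hr
    exact main_est r hr

end Stmt3Aux

open Stmt3Aux Filter Topology

theorem stmt_3 {X : Type*} [NormedAddCommGroup X] [NormedSpace ℝ X] [CompleteSpace X]
    (T : BoundedContinuousFunction (Ici (0 : ℝ)) X →ₗ[ℝ]
         BoundedContinuousFunction (Ici (0 : ℝ)) X)
    (h : ℝ → ℝ) (hpos : ∀ t, 0 ≤ t → 0 ≤ h t)
    (hint : IntegrableOn h (Ioi (0 : ℝ)) volume)
    (hT : ∀ f : BoundedContinuousFunction (Ici (0 : ℝ)) X, ∀ x : ℝ, 0 ≤ x →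
      fstar (T f) x ≤ ∫ t in Ioi x, h t * fstar f t) :
    (∀ f : BoundedContinuousFunction (Ici (0 : ℝ)) X,
      ∃! u : BoundedContinuousFunction (Ici (0 : ℝ)) X, u = f + T u) ∧
    (∀ f u : BoundedContinuousFunction (Ici (0 : ℝ)) X, u = f + T u →
      ‖u‖ ≤ Real.exp (∫ t in Ioi (0 : ℝ), h t) * ‖f‖) := by
  classical
  set hh : ℝ → ℝ := (Ioi (0:ℝ)).indicator h with hhdef
  have hh_eq : ∀ t : ℝ, 0 < t → hh t = h t := fun t ht => Set.indicator_of_mem ht h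
  have hh0 : ∀ t, 0 ≤ hh t := fun t =>
    Set.indicator_nonneg (fun s hs => hpos s (le_of_lt hs)) t
  have hintg : Integrable hh := (integrable_indicator_iff measurableSet_Ioi).2 hint
  have hint0 : (∫ t in Ioi (0:ℝ), h t) = tl hh 0 := by
    simp only [tl]
    refine setIntegral_congr_fun measurableSet_Ioi fun t ht => ?_
    exact (hh_eq t ht).symm
  -- boundedness of T
  have hbound : ∀ f : BoundedContinuousFunction (Ici (0:ℝ)) X, ‖T f‖ ≤ tl hh 0 * ‖f‖ := by
    intro f
    have h1 : fstar (T f) 0 ≤ ∫ t in Ioi (0:ℝ), h t * fstar f t := hT f 0 le_rfl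
    have h2 : (∫ t in Ioi (0:ℝ), h t * fstar f t) = ∫ t in Ioi (0:ℝ), hh t * fstar f t :=
      setIntegral_congr_fun measurableSet_Ioi fun t ht => by rw [hh_eq t ht]
    have h3 : (∫ t in Ioi (0:ℝ), hh t * fstar f t) ≤ ∫ t in Ioi (0:ℝ), hh t * ‖f‖ := by
      refine setIntegral_mono_on (integrable_mul_fstar hintg f).integrableOn
        (hintg.mul_const _).integrableOn measurableSet_Ioi fun t _ => ?_
      exact mul_le_mul_of_nonneg_left (fstar_le_norm f t) (hh0 t)
    have h4 : (∫ t in Ioi (0:ℝ), hh t * ‖f‖) = tl hh 0 * ‖f‖ := by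
      rw [integral_mul_const]; simp only [tl]
    have h5 := norm_le_fstar_zero (T f)
    linarith
  let T' : BoundedContinuousFunction (Ici (0:ℝ)) X →L[ℝ] BoundedContinuousFunction (Ici (0:ℝ)) X :=
    LinearMap.mkContinuous T (tl hh 0) hbound
  have hT'app : ∀ f, T' f = T f := fun f => rfl
  -- iterate bound
  have IC : ∀ n : ℕ, ∀ f : BoundedContinuousFunction (Ici (0:ℝ)) X, ∀ x : ℝ, 0 ≤ x →
      fstar ((T' ^ n) f) x ≤ tl hh x ^ n / (Nat.factorial n : ℝ) * ‖f‖ := by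
    intro n
    induction n with
    | zero =>
      intro f x _
      simpa using fstar_le_norm f x
    | succ n ih =>
      intro f x hx
      have happ : (T' ^ (n + 1)) f = T ((T' ^ n) f) := by
        rw [pow_succ']; rfl
      have hintF := integrable_mul_fstar hintg ((T' ^ n) f)
      have Kint := integrable_mul_tl_pow hh0 hintg n
      have hint2 : Integrable (fun t => hh t * (tl hh t ^ n / (Nat.factorial n : ℝ) * ‖f‖)) :=
        (Kint.mul_const (‖f‖ / (Nat.factorial n : ℝ))).congr (ae_of_all _ fun t => by ring)
      rw [happ]
      calc fstar (T ((T' ^ n) f)) x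
          ≤ ∫ t in Ioi x, h t * fstar ((T' ^ n) f) t := hT _ x hx
        _ = ∫ t in Ioi x, hh t * fstar ((T' ^ n) f) t :=
            setIntegral_congr_fun measurableSet_Ioi fun t ht => by
              rw [hh_eq t (lt_of_le_of_lt hx ht)]
        _ ≤ ∫ t in Ioi x, hh t * (tl hh t ^ n / (Nat.factorial n : ℝ) * ‖f‖) := by
            refine setIntegral_mono_on hintF.integrableOn hint2.integrableOn
              measurableSet_Ioi fun t ht => ?_
            exact mul_le_mul_of_nonneg_left (ih f t (hx.trans (le_of_lt ht))) (hh0 t)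
        _ = (∫ t in Ioi x, hh t * tl hh t ^ n) * (‖f‖ / (Nat.factorial n : ℝ)) := by
            rw [← integral_mul_const]
            exact setIntegral_congr_fun measurableSet_Ioi fun t _ => by ring
        _ ≤ (tl hh x ^ (n + 1) / (n + 1)) * (‖f‖ / (Nat.factorial n : ℝ)) :=
            mul_le_mul_of_nonneg_right (key hh0 hintg n x)
              (div_nonneg (norm_nonneg f) (Nat.cast_nonneg _))
        _ = tl hh x ^ (n + 1) / (Nat.factorial (n + 1) : ℝ) * ‖f‖ := by
            rw [Nat.factorial_succ]
            have hfac : ((Nat.factorial n : ℕ) : ℝ) ≠ 0 :=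
              Nat.cast_ne_zero.2 (Nat.factorial_ne_zero n)
            push_cast
            field_simp
  have hg0 : 0 ≤ tl hh 0 := tl_nonneg hh0 0
  have hTn : ∀ n : ℕ, ‖T' ^ n‖ ≤ tl hh 0 ^ n / (Nat.factorial n : ℝ) := by
    intro n
    refine ContinuousLinearMap.opNorm_le_bound _
      (div_nonneg (pow_nonneg hg0 n) (Nat.cast_nonneg _)) fun f => ?_
    exact (norm_le_fstar_zero _).trans (IC n f 0 le_rfl)
  have hsum : Summable fun n : ℕ => T' ^ n :=
    Summable.of_norm_bounded (Real.summable_pow_div_factorial _) hTn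
  set S := ∑' n : ℕ, T' ^ n with hSdef
  have hmulS : T' * S = S - 1 := by
    rw [hSdef, ← hsum.tsum_mul_left T']
    have e : ∑' n : ℕ, T' * T' ^ n = ∑' n : ℕ, T' ^ (n + 1) :=
      tsum_congr fun n => (pow_succ' T' n).symm
    rw [e]
    have h0' := Summable.tsum_eq_zero_add hsum
    rw [pow_zero] at h0'
    rw [h0']; abel
  have hmulS' : S * T' = S - 1 := by
    rw [hSdef, ← hsum.tsum_mul_right T']
    have e : ∑' n : ℕ, T' ^ n * T' = ∑' n : ℕ, T' ^ (n + 1) :=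
      tsum_congr fun n => (pow_succ T' n).symm
    rw [e]
    have h0' := Summable.tsum_eq_zero_add hsum
    rw [pow_zero] at h0'
    rw [h0']; abel
  have hS1 : (1 - T') * S = 1 := by rw [sub_mul, one_mul, hmulS, sub_sub_cancel]
  have hS2 : S * (1 - T') = 1 := by rw [mul_sub, mul_one, hmulS', sub_sub_cancel]
  have hsolve : ∀ u f₀ : BoundedContinuousFunction (Ici (0:ℝ)) X, u = f₀ + T u → u = S f₀ := by
    intro u f₀ hu
    have h1 : (1 - T') u = f₀ := by
      rw [ContinuousLinearMap.sub_apply, ContinuousLinearMap.one_apply, hT'app]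
      nth_rewrite 1 [hu]
      exact add_sub_cancel_right f₀ (T u)
    have h2 : S ((1 - T') u) = u := by
      rw [← ContinuousLinearMap.mul_apply, hS2, ContinuousLinearMap.one_apply]
    rw [← h2, h1]
  have hsat : ∀ f₀ : BoundedContinuousFunction (Ici (0:ℝ)) X, S f₀ = f₀ + T (S f₀) := by
    intro f₀
    have h1 : (1 - T') (S f₀) = f₀ := by
      rw [← ContinuousLinearMap.mul_apply, hS1, ContinuousLinearMap.one_apply]
    rw [ContinuousLinearMap.sub_apply, ContinuousLinearMap.one_apply, hT'app] at h1
    exact sub_eq_iff_eq_add.1 h1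
  have hsumnorm : Summable fun n : ℕ => ‖T' ^ n‖ :=
    Summable.of_nonneg_of_le (fun n => norm_nonneg _) hTn (Real.summable_pow_div_factorial _)
  have hSnorm : ‖S‖ ≤ Real.exp (tl hh 0) := by
    have h1 : ‖S‖ ≤ ∑' n : ℕ, ‖T' ^ n‖ := by
      rw [hSdef]; exact norm_tsum_le_tsum_norm hsumnorm
    have h2 : (∑' n : ℕ, ‖T' ^ n‖) ≤ ∑' n : ℕ, tl hh 0 ^ n / (Nat.factorial n : ℝ) :=
      Summable.tsum_le_tsum hTn hsumnorm (Real.summable_pow_div_factorial _)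
    have h3 : (∑' n : ℕ, tl hh 0 ^ n / (Nat.factorial n : ℝ)) = Real.exp (tl hh 0) := by
      rw [Real.exp_eq_exp_ℝ, NormedSpace.exp_eq_tsum_div]
    linarith
  refine ⟨fun f => ⟨S f, hsat f, fun u hu => hsolve u f hu⟩, ?_⟩
  intro f u hu
  rw [hsolve u f hu, hint0]
  calc ‖S f‖ ≤ ‖S‖ * ‖f‖ := S.le_opNorm f
    _ ≤ Real.exp (tl hh 0) * ‖f‖ := mul_le_mul_of_nonneg_right hSnorm (norm_nonneg f)

end
end

section
/- Let u₀ ∈ H^{3,3}(ℝ). Then the Jost solutions satisfy, for all x ∈ ℝ and all k in the relevant domain (Im(k²) ≤ 0 for ω⁺, Im(k²) ≥ 0 for ω⁻; note −k lies in the same domain as k): ω₁₁^±(x, −k) = ω₁₁^±(x, k) and ω₂₁^±(x, −k) = −ω₂₁^±(x, k). Consequently, the scattering coefficients satisfy a(−k) = a(k) and b(−k) = −b(k) for every k ∈ Σ. -/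
open MeasureTheory Complex Set

noncomputable section

def SigmaSet : Set ℂ := {k : ℂ | (k ^ 2).im = 0}

def SolPlus (u₀ : ℝ → ℂ) (k : ℂ) (f g : ℝ → ℂ) : Prop :=
  Continuous f ∧ Continuous g ∧
  (∃ C : ℝ, ∀ x : ℝ, ‖f x‖ ≤ C ∧ ‖g x‖ ≤ C) ∧
  ∀ x : ℝ,
    f x = 1 - k * (∫ y in Ioi x, (starRingEnd ℂ) (qf u₀ y) * g y)
            - (Complex.I / 2) * (∫ y in Ioi x, (‖qf u₀ y‖ : ℂ) ^ 2 * f y) ∧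
    g x = k * (∫ y in Ioi x,
              Complex.exp (2 * Complex.I * k ^ 2 * ((x - y : ℝ) : ℂ)) * qf u₀ y * f y)
            + (Complex.I / 2) * (∫ y in Ioi x,
              Complex.exp (2 * Complex.I * k ^ 2 * ((x - y : ℝ) : ℂ))
                * (‖qf u₀ y‖ : ℂ) ^ 2 * g y)

def SolMinus (u₀ : ℝ → ℂ) (k : ℂ) (f g : ℝ → ℂ) : Prop :=
  Continuous f ∧ Continuous g ∧
  (∃ C : ℝ, ∀ x : ℝ, ‖f x‖ ≤ C ∧ ‖g x‖ ≤ C) ∧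
  ∀ x : ℝ,
    f x = 1 - k * (-∫ y in Iio x, (starRingEnd ℂ) (qf u₀ y) * g y)
            - (Complex.I / 2) * (-∫ y in Iio x, (‖qf u₀ y‖ : ℂ) ^ 2 * f y) ∧
    g x = k * (-∫ y in Iio x,
              Complex.exp (2 * Complex.I * k ^ 2 * ((x - y : ℝ) : ℂ)) * qf u₀ y * f y)
            + (Complex.I / 2) * (-∫ y in Iio x,
              Complex.exp (2 * Complex.I * k ^ 2 * ((x - y : ℝ) : ℂ))
                * (‖qf u₀ y‖ : ℂ) ^ 2 * g y)

/-- `a(k)` built from the Jost solutions. -/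
def acoef (ω11p ω21p ω11m ω21m : ℝ → ℂ → ℂ) (k : ℂ) : ℂ :=
  ω11m 0 k * (starRingEnd ℂ) (ω11p 0 ((starRingEnd ℂ) k))
    + ω21m 0 k * (starRingEnd ℂ) (ω21p 0 ((starRingEnd ℂ) k))

/-- `b(k)` built from the Jost solutions. -/
def bcoef (ω11p ω21p ω11m ω21m : ℝ → ℂ → ℂ) (k : ℂ) : ℂ :=
  (starRingEnd ℂ) (ω21p 0 ((starRingEnd ℂ) k)) * (starRingEnd ℂ) (ω11m 0 ((starRingEnd ℂ) k))
    - (starRingEnd ℂ) (ω11p 0 ((starRingEnd ℂ) k))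
        * (starRingEnd ℂ) (ω21m 0 ((starRingEnd ℂ) k))

def Complex.abs : AbsoluteValue ℂ ℝ := NormedField.toAbsoluteValue ℂ

lemma Complex.norm_eq_abs (z : ℂ) : ‖z‖ = Complex.abs z := rfl

lemma Complex.abs_conj (z : ℂ) : Complex.abs ((starRingEnd ℂ) z) = Complex.abs z := by
  rw [← Complex.norm_eq_abs, ← Complex.norm_eq_abs, Complex.norm_conj]

lemma Complex.abs_ofReal (r : ℝ) : Complex.abs (r : ℂ) = |r| := by
  rw [← Complex.norm_eq_abs, Complex.norm_real, Real.norm_eq_abs]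

lemma Complex.abs_exp (z : ℂ) : Complex.abs (Complex.exp z) = Real.exp z.re := by
  rw [← Complex.norm_eq_abs, Complex.norm_exp]

lemma Complex.abs_exp_ofReal_mul_I (x : ℝ) : Complex.abs (Complex.exp (x * Complex.I)) = 1 := by
  rw [← Complex.norm_eq_abs, Complex.norm_exp_ofReal_mul_I]

@[simp] lemma Complex.abs_I : Complex.abs Complex.I = 1 := by
  rw [← Complex.norm_eq_abs, Complex.norm_I]

@[simp] lemma Complex.abs_two : Complex.abs 2 = 2 := by
  rw [← Complex.norm_eq_abs]; norm_num

lemma Complex.continuous_abs : Continuous Complex.abs := continuous_norm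

lemma gronwall_zero (m M : ℝ → ℝ) (hm : Integrable m) (hm0 : ∀ x, 0 ≤ m x)
    (hM : Continuous M) (hM0 : ∀ x, 0 ≤ M x) (C : ℝ)
    (hMC : ∀ x, M x ≤ C)
    (key : ∀ x, M x ≤ 2 * ∫ y in Ioi x, m y * M y) : ∀ x, M x = 0 := by
  have hC0 : 0 ≤ C := le_trans (hM0 0) (hMC 0)
  have hMmeas : AEStronglyMeasurable M volume := hM.aestronglyMeasurable
  have hmM : Integrable (fun y => m y * M y) volume := by
    refine Integrable.mono' (hm.const_mul C) (hm.aestronglyMeasurable.mul hMmeas) ?_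
    filter_upwards with y
    rw [Real.norm_eq_abs, _root_.abs_of_nonneg (mul_nonneg (hm0 y) (hM0 y)), mul_comm (C : ℝ)]
    exact mul_le_mul_of_nonneg_left (hMC y) (hm0 y)
  -- tail integral of m tends to 0
  obtain ⟨b, hb⟩ : ∃ b : ℝ, (∫ y in Ioi b, m y) ≤ 1 / 8 := by
    have h1 : Filter.Tendsto (fun b => ∫ y in (0:ℝ)..b, m y) Filter.atTop
        (nhds (∫ y in Ioi (0:ℝ), m y)) :=
      MeasureTheory.intervalIntegral_tendsto_integral_Ioi 0 hm.integrableOn Filter.tendsto_id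
    have h2 : Filter.Tendsto (fun b => (∫ y in Ioi (0:ℝ), m y) - ∫ y in (0:ℝ)..b, m y)
        Filter.atTop (nhds 0) := by
      simpa using ((tendsto_const_nhds (x := ∫ y in Ioi (0:ℝ), m y)).sub h1)
    have h3 := h2.eventually_le_const (by norm_num : (0:ℝ) < 1/8)
    rw [Filter.eventually_atTop] at h3
    obtain ⟨b0, hb0⟩ := h3
    refine ⟨max b0 0, ?_⟩
    have hble : (0:ℝ) ≤ max b0 0 := le_max_right _ _
    have hsplit : (∫ y in Ioi (0:ℝ), m y)
        = (∫ y in (0:ℝ)..(max b0 0), m y) + ∫ y in Ioi (max b0 0), m y := by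
      rw [intervalIntegral.integral_of_le hble, ← setIntegral_union]
      · rw [Ioc_union_Ioi_eq_Ioi hble]
      · exact Ioc_disjoint_Ioi le_rfl
      · exact measurableSet_Ioi
      · exact hm.integrableOn
      · exact hm.integrableOn
    have := hb0 (max b0 0) (le_max_left _ _)
    linarith [hsplit ▸ this]
  have hmnn : 0 ≤ᵐ[volume.restrict (Ioi b)] m := Filter.Eventually.of_forall hm0
  -- base case: M vanishes on [b, ∞)
  have base : ∀ x, b ≤ x → M x = 0 := by
    have hn : ∀ n : ℕ, ∀ x, b ≤ x → M x ≤ C / 2 ^ n := by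
      intro n
      induction n with
      | zero => intro x _; simpa using hMC x
      | succ n ih =>
        intro x hx
        have h1 : (∫ y in Ioi x, m y * M y) ≤ ∫ y in Ioi x, m y * (C / 2 ^ n) := by
          refine setIntegral_mono_on hmM.integrableOn ((hm.mul_const _).integrableOn)
            measurableSet_Ioi (fun y hy => ?_)
          exact mul_le_mul_of_nonneg_left (ih y (le_trans hx (le_of_lt hy))) (hm0 y)
        have h2 : (∫ y in Ioi x, m y * (C / 2 ^ n)) = (∫ y in Ioi x, m y) * (C / 2 ^ n) :=
          integral_mul_const _ _
        have h3 : (∫ y in Ioi x, m y) ≤ ∫ y in Ioi b, m y := by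
          refine setIntegral_mono_set hm.integrableOn hmnn ?_
          exact (Ioi_subset_Ioi hx).eventuallyLE
        have h4 : (0:ℝ) ≤ ∫ y in Ioi x, m y :=
          setIntegral_nonneg measurableSet_Ioi (fun y _ => hm0 y)
        have h5 : (0:ℝ) ≤ C / 2 ^ n := by positivity
        have h6 : (∫ y in Ioi x, m y) * (C / 2 ^ n) ≤ (1/8) * (C / 2 ^ n) :=
          mul_le_mul_of_nonneg_right (le_trans h3 hb) h5
        have h7 := key x
        have h8 : C / 2 ^ (n + 1) = (C / 2 ^ n) / 2 := by ring
        rw [h8]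
        calc M x ≤ 2 * ∫ y in Ioi x, m y * M y := h7
          _ ≤ 2 * ((1/8) * (C / 2 ^ n)) := by
              refine mul_le_mul_of_nonneg_left ?_ (by norm_num)
              exact le_trans h1 (le_trans (le_of_eq h2) h6)
          _ ≤ (C / 2 ^ n) / 2 := by linarith
    intro x hx
    have hlim : Filter.Tendsto (fun n : ℕ => C / 2 ^ n) Filter.atTop (nhds 0) := by
      have : Filter.Tendsto (fun n : ℕ => ((1:ℝ)/2) ^ n) Filter.atTop (nhds 0) :=
        tendsto_pow_atTop_nhds_zero_of_lt_one (by norm_num) (by norm_num)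
      have h := this.const_mul C
      simpa [div_eq_mul_inv, mul_pow, mul_comm] using h
    have hle : M x ≤ 0 := ge_of_tendsto' hlim (fun n => hn n x hx)
    exact le_antisymm hle (hM0 x)
  -- step lemma
  have step : ∀ a c : ℝ, a ≤ c → (∫ y in Ioc a c, m y) ≤ 1/8 →
      (∀ x, c ≤ x → M x = 0) → ∀ x, a ≤ x → M x = 0 := by
    intro a c hac hmass hzero x hax
    rcases le_or_gt c x with hcx | hxc
    · exact hzero x hcx
    obtain ⟨z, hz, hzmax⟩ := isCompact_Icc.exists_isMaxOn (nonempty_Icc.mpr hac)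
      hM.continuousOn
    set S := M z with hSdef
    have hS0 : 0 ≤ S := hM0 z
    have hbound : ∀ w, w ∈ Icc a c → M w ≤ S / 4 := by
      intro w hw
      have htail : (∫ y in Ioi c, m y * M y) = 0 := by
        have h0 : ∀ y ∈ Ioi c, m y * M y = 0 := by
          intro y hy; rw [hzero y (le_of_lt hy), mul_zero]
        rw [setIntegral_congr_fun measurableSet_Ioi h0]
        simp
      have hsplit : (∫ y in Ioi w, m y * M y)
          = (∫ y in Ioc w c, m y * M y) + ∫ y in Ioi c, m y * M y := by
        rw [← setIntegral_union (Ioc_disjoint_Ioi le_rfl) measurableSet_Ioi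
          hmM.integrableOn hmM.integrableOn, Ioc_union_Ioi_eq_Ioi hw.2]
      have h1 : (∫ y in Ioc w c, m y * M y) ≤ ∫ y in Ioc w c, m y * S := by
        refine setIntegral_mono_on hmM.integrableOn ((hm.mul_const _).integrableOn)
          measurableSet_Ioc (fun y hy => ?_)
        refine mul_le_mul_of_nonneg_left ?_ (hm0 y)
        exact hzmax ⟨le_trans hw.1 (le_of_lt hy.1), hy.2⟩
      have h2 : (∫ y in Ioc w c, m y * S) = (∫ y in Ioc w c, m y) * S :=
        integral_mul_const _ _
      have h3 : (∫ y in Ioc w c, m y) ≤ ∫ y in Ioc a c, m y := by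
        refine setIntegral_mono_set hm.integrableOn
          (Filter.Eventually.of_forall hm0) ?_
        exact (Ioc_subset_Ioc_left hw.1).eventuallyLE
      have h6 : (∫ y in Ioc w c, m y) * S ≤ (1/8) * S :=
        mul_le_mul_of_nonneg_right (le_trans h3 hmass) hS0
      calc M w ≤ 2 * ∫ y in Ioi w, m y * M y := key w
        _ = 2 * ((∫ y in Ioc w c, m y * M y) + 0) := by rw [hsplit, htail]
        _ ≤ 2 * ((1/8) * S) := by
            refine mul_le_mul_of_nonneg_left ?_ (by norm_num)
            rw [add_zero]
            exact le_trans h1 (le_trans (le_of_eq h2) h6)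
        _ = S / 4 := by ring
    have hSz : S ≤ S / 4 := hbound z hz
    have hS : S = 0 := by linarith
    have hx1 : M x ≤ S / 4 := hbound x ⟨hax, le_of_lt hxc⟩
    have hx2 := hM0 x
    linarith
  -- march leftward
  have march : ∀ n : ℕ, ∀ a, (∫ y in Ioc a b, m y) ≤ n / 8 → ∀ x, a ≤ x → M x = 0 := by
    intro n
    induction n with
    | zero =>
      intro a hmass x hax
      rcases le_or_gt b a with h | h
      · exact base x (le_trans h hax)
      · refine step a b (le_of_lt h) (le_trans hmass (by norm_num)) base x hax
    | succ n ih =>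
      intro a hmass x hax
      rcases le_or_gt b a with h | h
      · exact base x (le_trans h hax)
      rcases le_or_gt (∫ y in Ioc a b, m y) (n / 8) with h' | h'
      · exact ih a h' x hax
      have hcont : Continuous (fun c => ∫ y in c..b, m y) := by
        have h1 : Continuous (fun c => ∫ y in b..c, m y) :=
          intervalIntegral.continuous_primitive (fun _ _ => hm.intervalIntegrable) b
        have h2 := h1.neg
        refine h2.congr (fun c => ?_)
        rw [Pi.neg_apply, ← intervalIntegral.integral_symm]
      have hmem : (n / 8 : ℝ) ∈ Icc (∫ y in b..b, m y) (∫ y in a..b, m y) := by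
        rw [intervalIntegral.integral_same, intervalIntegral.integral_of_le (le_of_lt h)]
        constructor
        · positivity
        · exact le_of_lt h'
      obtain ⟨c, hc, hceq⟩ := intermediate_value_Icc' (le_of_lt h)
        hcont.continuousOn hmem
      have hcb : (∫ y in Ioc c b, m y) = n / 8 := by
        rw [← intervalIntegral.integral_of_le hc.2]; exact hceq
      have hzero_c : ∀ x, c ≤ x → M x = 0 := ih c (le_of_eq hcb) 
      have hadd : (∫ y in Ioc a c, m y) + (∫ y in Ioc c b, m y) = ∫ y in Ioc a b, m y := by
        rw [← intervalIntegral.integral_of_le hc.1, ← intervalIntegral.integral_of_le hc.2,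
          ← intervalIntegral.integral_of_le (le_of_lt h)]
        exact intervalIntegral.integral_add_adjacent_intervals hm.intervalIntegrable
          hm.intervalIntegrable
      have hsmall : (∫ y in Ioc a c, m y) ≤ 1/8 := by
        have : ((n:ℝ) + 1) / 8 = n / 8 + 1/8 := by ring
        push_cast at hmass
        linarith
      exact step a c hc.1 hsmall hzero_c x hax
  intro x
  obtain ⟨n, hn⟩ := exists_nat_ge (8 * ∫ y in Ioc x b, m y)
  exact march n x (by linarith) x le_rfl

lemma qf_abs (u₀ : ℝ → ℂ) (x : ℝ) :
    Complex.abs (qf u₀ x) = Complex.abs (deriv u₀ x) := by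
  unfold qf
  rw [map_mul, Complex.abs_conj, mul_comm Complex.I, Complex.abs_exp_ofReal_mul_I, mul_one]

section facts
variable {u₀ : ℝ → ℂ} (hu : MemHms 3 3 u₀)

lemma weight_facts (x : ℝ) :
    1 ≤ ((1 + x ^ 2) ^ ((3 : ℝ) / 2) : ℝ) :=
  Real.one_le_rpow (by nlinarith [sq_nonneg x]) (by norm_num)

include hu

lemma vsq_int : Integrable
    (fun x : ℝ => ‖((1 + x ^ 2) ^ ((3 : ℝ) / 2) : ℝ) • deriv u₀ x‖ ^ 2) volume := by
  have hw := hu 1 (by norm_num)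
  simp only [iteratedDeriv_one] at hw
  have h3 : ((3 : ℕ) : ℝ) = (3 : ℝ) := by norm_num
  rw [h3] at hw
  exact hw.norm.integrable_sq

lemma deriv_sq_int : Integrable (fun x : ℝ => Complex.abs (deriv u₀ x) ^ 2) volume := by
  have hd : Measurable (deriv u₀) := measurable_deriv u₀
  refine Integrable.mono' (vsq_int hu) ?_ ?_
  · exact ((hd.norm.pow_const 2).aestronglyMeasurable).congr
      (Filter.Eventually.of_forall (fun x => by simp [Complex.norm_eq_abs]))
  · filter_upwards with x
    rw [Real.norm_eq_abs, _root_.abs_of_nonneg (by positivity)]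
    have h1 : Complex.abs (deriv u₀ x) ≤ ‖((1 + x ^ 2) ^ ((3 : ℝ) / 2) : ℝ) • deriv u₀ x‖ := by
      rw [norm_smul, Real.norm_eq_abs, _root_.abs_of_nonneg (by positivity),
        Complex.norm_eq_abs]
      nlinarith [weight_facts x, Complex.abs.nonneg (deriv u₀ x)]
    exact pow_le_pow_left₀ (Complex.abs.nonneg _) h1 2

lemma deriv_abs_int : Integrable (fun x : ℝ => Complex.abs (deriv u₀ x)) volume := by
  have hd : Measurable (deriv u₀) := measurable_deriv u₀
  have hdom : Integrable (fun x : ℝ =>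
      ((1 + x ^ 2)⁻¹ + ‖((1 + x ^ 2) ^ ((3 : ℝ) / 2) : ℝ) • deriv u₀ x‖ ^ 2) / 2) volume :=
    (integrable_inv_one_add_sq.add (vsq_int hu)).div_const 2
  refine Integrable.mono' hdom ?_ ?_
  · exact (hd.norm.aestronglyMeasurable).congr
      (Filter.Eventually.of_forall (fun x => by simp [Complex.norm_eq_abs]))
  · filter_upwards with x
    set w : ℝ := (1 + x ^ 2) ^ ((3 : ℝ) / 2) with hwdef
    set a : ℝ := Complex.abs (deriv u₀ x) with hadef
    have hw1 : 1 ≤ w := weight_facts x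
    have hw0 : 0 < w := lt_of_lt_of_le one_pos hw1
    have ha0 : 0 ≤ a := Complex.abs.nonneg _
    have hs : ‖w • deriv u₀ x‖ = w * a := by
      rw [norm_smul, Real.norm_eq_abs, _root_.abs_of_pos hw0, Complex.norm_eq_abs]
    rw [Real.norm_eq_abs, _root_.abs_of_nonneg ha0, hs]
    have hwsq : w ^ 2 = (1 + x ^ 2) ^ (3 : ℝ) := by
      rw [hwdef, ← Real.rpow_natCast ((1 + x ^ 2) ^ ((3 : ℝ) / 2)) 2,
        ← Real.rpow_mul (by positivity)]
      norm_num
    have hx1 : (1 : ℝ) ≤ 1 + x ^ 2 := by nlinarith [sq_nonneg x]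
    have hcube : (1 + x ^ 2) ≤ (1 + x ^ 2) ^ (3 : ℝ) := by
      have h3 : ((3 : ℝ)) = ((3 : ℕ) : ℝ) := by norm_num
      rw [h3, Real.rpow_natCast]
      have hx1 : (1:ℝ) ≤ 1 + x ^ 2 := by nlinarith [sq_nonneg x]
      exact le_self_pow₀ hx1 (by norm_num)
    have hinv : (w ^ 2)⁻¹ ≤ (1 + x ^ 2)⁻¹ := by
      rw [hwsq]
      exact inv_anti₀ (by linarith) hcube
    -- a = (w⁻¹) * (w * a); AM-GM
    have key : a * w ≤ ((w^2)⁻¹ + (w * a) ^ 2) * w / 2 := by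
      have h := sq_nonneg (w⁻¹ - w * a)
      have hww : w⁻¹ * w = 1 := inv_mul_cancel₀ (ne_of_gt hw0)
      have hexp : w⁻¹ * (w * a) ≤ ((w⁻¹)^2 + (w * a)^2) / 2 := by nlinarith
      have h2 : w⁻¹ * (w * a) = a := by
        rw [← mul_assoc, hww, one_mul]
      have h3 : (w⁻¹)^2 = (w^2)⁻¹ := by rw [inv_pow]
      rw [h2, h3] at hexp
      calc a * w ≤ (((w^2)⁻¹ + (w * a)^2) / 2) * w := by
            exact mul_le_mul_of_nonneg_right hexp (le_of_lt hw0)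
        _ = ((w^2)⁻¹ + (w * a) ^ 2) * w / 2 := by ring
    nlinarith [key, mul_le_mul_of_nonneg_right hinv (le_of_lt hw0), hw0]

lemma phi_measurable : Measurable (phi u₀) := by
  have : Monotone (phi u₀) := by
    intro x y hxy
    exact setIntegral_mono_set (deriv_sq_int hu).integrableOn
      (Filter.Eventually.of_forall (fun s => by positivity))
      (Iio_subset_Iio hxy).eventuallyLE
  exact this.measurable

lemma qf_aesm : AEStronglyMeasurable (qf u₀) volume := by
  have hd : Measurable (deriv u₀) := measurable_deriv u₀
  have h1 : Measurable fun x : ℝ => (starRingEnd ℂ) (deriv u₀ x) :=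
    Complex.continuous_conj.measurable.comp hd
  have h2 : Measurable fun x : ℝ => Complex.exp (Complex.I * (phi u₀ x : ℝ)) :=
    Complex.measurable_exp.comp
      ((Complex.measurable_ofReal.comp (phi_measurable hu)).const_mul Complex.I)
  exact (h1.mul h2).aestronglyMeasurable

lemma qf_abs_int : Integrable (fun x : ℝ => Complex.abs (qf u₀ x)) volume := by
  refine (deriv_abs_int hu).congr ?_
  filter_upwards with x
  rw [qf_abs]

lemma qf_abs_sq_int : Integrable (fun x : ℝ => Complex.abs (qf u₀ x) ^ 2) volume := by
  refine (deriv_sq_int hu).congr ?_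
  filter_upwards with x
  rw [qf_abs]

end facts

lemma gronwall_zero_left (m M : ℝ → ℝ) (hm : Integrable m) (hm0 : ∀ x, 0 ≤ m x)
    (hM : Continuous M) (hM0 : ∀ x, 0 ≤ M x) (C : ℝ)
    (hMC : ∀ x, M x ≤ C)
    (key : ∀ x, M x ≤ 2 * ∫ y in Iio x, m y * M y) : ∀ x, M x = 0 := by
  have hmneg : Integrable (fun x => m (-x)) volume := by
    have h := (Measure.measurePreserving_neg (volume : Measure ℝ)).integrable_comp_emb
      measurableEmbedding_neg (g := m)
    exact h.mpr hm
  have key' : ∀ x, M (-x) ≤ 2 * ∫ y in Ioi x, m (-y) * M (-y) := by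
    intro x
    have h1 : (∫ y in Ioi x, m (-y) * M (-y)) = ∫ y in Iic (-x), m y * M y :=
      integral_comp_neg_Ioi x (fun y => m y * M y)
    rw [h1, integral_Iic_eq_integral_Iio]
    exact key (-x)
  have h0 := gronwall_zero (fun x => m (-x)) (fun x => M (-x)) hmneg
    (fun x => hm0 (-x)) (hM.comp continuous_neg) (fun x => hM0 (-x)) C
    (fun x => hMC (-x)) key'
  intro x
  have := h0 (-x)
  simpa using this

section uniq

variable {u₀ : ℝ → ℂ}
  (hq1 : Integrable (fun x => Complex.abs (qf u₀ x)) volume)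
  (hq2 : Integrable (fun x => Complex.abs (qf u₀ x) ^ 2) volume)
  (hqm : AEStronglyMeasurable (qf u₀) volume)

-- measurability helpers
lemma habsq (hqm : AEStronglyMeasurable (qf u₀) volume) :
    AEStronglyMeasurable (fun y => Complex.abs (qf u₀ y)) volume :=
  hqm.norm.congr (Filter.Eventually.of_forall (fun y => by simp [Complex.norm_eq_abs]))

lemma habsq2 (hqm : AEStronglyMeasurable (qf u₀) volume) :
    AEStronglyMeasurable (fun y => Complex.abs (qf u₀ y) ^ 2) volume :=
  ((habsq hqm).mul (habsq hqm)).congr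
    (Filter.Eventually.of_forall (fun y => (pow_two _).symm))

-- integrability of conj q * u for bounded measurable u
lemma int_conj_mul (hqm : AEStronglyMeasurable (qf u₀) volume)
    (hq1 : Integrable (fun x => Complex.abs (qf u₀ x)) volume)
    {u : ℝ → ℂ} (hu : Continuous u) {D : ℝ} (hD : ∀ x, Complex.abs (u x) ≤ D) :
    Integrable (fun y => (starRingEnd ℂ) (qf u₀ y) * u y) volume := by
  refine Integrable.mono' (hq1.const_mul D)
    ((Complex.continuous_conj.comp_aestronglyMeasurable hqm).mul
      hu.aestronglyMeasurable) ?_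
  filter_upwards with y
  rw [norm_mul, Complex.norm_eq_abs, Complex.norm_eq_abs, Complex.abs_conj, mul_comm (D : ℝ)]
  exact mul_le_mul_of_nonneg_left (hD y) (Complex.abs.nonneg _)

lemma int_sq_mul (hqm : AEStronglyMeasurable (qf u₀) volume)
    (hq2 : Integrable (fun x => Complex.abs (qf u₀ x) ^ 2) volume)
    {u : ℝ → ℂ} (hu : Continuous u) {D : ℝ} (hD : ∀ x, Complex.abs (u x) ≤ D) :
    Integrable (fun y => ((Complex.abs (qf u₀ y) : ℂ)) ^ 2 * u y) volume := by
  refine Integrable.mono' (hq2.const_mul D)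
    (((Complex.continuous_ofReal.comp_aestronglyMeasurable (habsq hqm)).mul
      (Complex.continuous_ofReal.comp_aestronglyMeasurable (habsq hqm))).mul
      hu.aestronglyMeasurable |>.congr
      (Filter.Eventually.of_forall (fun y => by simp [Pi.mul_apply, pow_two]))) ?_
  filter_upwards with y
  rw [norm_mul, Complex.norm_eq_abs, Complex.norm_eq_abs, mul_comm (D : ℝ)]
  have h1 : Complex.abs ((Complex.abs (qf u₀ y) : ℂ) ^ 2) = Complex.abs (qf u₀ y) ^ 2 := by
    rw [map_pow, Complex.abs_ofReal, _root_.abs_of_nonneg (Complex.abs.nonneg _)]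
  rw [h1]
  exact mul_le_mul_of_nonneg_left (hD y) (by positivity)

-- the exponential kernel bound
lemma exp_bound {k : ℂ} (hk : (k ^ 2).im ≤ 0) {x y : ℝ} (hxy : x ≤ y) :
    Complex.abs (Complex.exp (2 * Complex.I * k ^ 2 * ((x - y : ℝ) : ℂ))) ≤ 1 := by
  rw [Complex.abs_exp, Real.exp_le_one_iff]
  have hre : (2 * Complex.I * k ^ 2 * ((x - y : ℝ) : ℂ)).re
      = -2 * (x - y) * (k ^ 2).im := by
    simp [Complex.mul_re, Complex.mul_im, Complex.I_re, Complex.I_im,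
      Complex.ofReal_re, Complex.ofReal_im]
    ring
  rw [hre]
  nlinarith [hk, sub_nonpos.mpr hxy]

lemma exp_bound' {k : ℂ} (hk : 0 ≤ (k ^ 2).im) {x y : ℝ} (hxy : y ≤ x) :
    Complex.abs (Complex.exp (2 * Complex.I * k ^ 2 * ((x - y : ℝ) : ℂ))) ≤ 1 := by
  rw [Complex.abs_exp, Real.exp_le_one_iff]
  have hre : (2 * Complex.I * k ^ 2 * ((x - y : ℝ) : ℂ)).re
      = -2 * (x - y) * (k ^ 2).im := by
    simp [Complex.mul_re, Complex.mul_im, Complex.I_re, Complex.I_im,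
      Complex.ofReal_re, Complex.ofReal_im]
    ring
  rw [hre]
  nlinarith [hk, sub_nonneg.mpr hxy]


lemma plus_unique (hq1 : Integrable (fun x => Complex.abs (qf u₀ x)) volume)
    (hq2 : Integrable (fun x => Complex.abs (qf u₀ x) ^ 2) volume)
    (hqm : AEStronglyMeasurable (qf u₀) volume)
    (k : ℂ) (hk : (k ^ 2).im ≤ 0) {f₁ g₁ f₂ g₂ : ℝ → ℂ}
    (h₁ : SolPlus u₀ k f₁ g₁) (h₂ : SolPlus u₀ k f₂ g₂) :
    ∀ x, f₁ x = f₂ x ∧ g₁ x = g₂ x := by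
  obtain ⟨hf₁c, hg₁c, ⟨C₁, hC₁⟩, heq₁⟩ := h₁
  obtain ⟨hf₂c, hg₂c, ⟨C₂, hC₂⟩, heq₂⟩ := h₂
  simp only [Complex.norm_eq_abs] at heq₁ heq₂
  set q : ℝ → ℂ := qf u₀ with hqdef
  set D : ℝ := C₁ + C₂ with hDdef
  have hDh : ∀ x, Complex.abs (f₁ x - f₂ x) ≤ D := by
    intro x
    calc Complex.abs (f₁ x - f₂ x) ≤ Complex.abs (f₁ x) + Complex.abs (f₂ x) := by
          simpa [Complex.norm_eq_abs] using norm_sub_le (f₁ x) (f₂ x)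
      _ ≤ D := add_le_add (hC₁ x).1 (hC₂ x).1
  have hDj : ∀ x, Complex.abs (g₁ x - g₂ x) ≤ D := by
    intro x
    calc Complex.abs (g₁ x - g₂ x) ≤ Complex.abs (g₁ x) + Complex.abs (g₂ x) := by
          simpa [Complex.norm_eq_abs] using norm_sub_le (g₁ x) (g₂ x)
      _ ≤ D := add_le_add (hC₁ x).2 (hC₂ x).2
  have hD0 : 0 ≤ D := le_trans (Complex.abs.nonneg _) (hDh 0)
  have hhc : Continuous (fun x => f₁ x - f₂ x) := hf₁c.sub hf₂c
  have hjc : Continuous (fun x => g₁ x - g₂ x) := hg₁c.sub hg₂c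
  set M : ℝ → ℝ := fun x => Complex.abs (f₁ x - f₂ x) + Complex.abs (g₁ x - g₂ x)
    with hMdef
  set m : ℝ → ℝ := fun y => Complex.abs k * Complex.abs (q y)
    + Complex.abs (q y) ^ 2 / 2 with hmdef
  have hm0 : ∀ y, 0 ≤ m y := fun y => by positivity
  have hM0 : ∀ x, 0 ≤ M x := fun x =>
    add_nonneg (Complex.abs.nonneg _) (Complex.abs.nonneg _)
  have hMC : ∀ x, M x ≤ 2 * D := fun x => by
    have := hDh x; have := hDj x; simp only [hMdef]; linarith
  have hMcont : Continuous M :=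
    (Complex.continuous_abs.comp hhc).add (Complex.continuous_abs.comp hjc)
  have hmInt : Integrable m volume :=
    (hq1.const_mul (Complex.abs k)).add (hq2.div_const 2)
  have hmaesm : AEStronglyMeasurable m volume := hmInt.aestronglyMeasurable
  have hmM : Integrable (fun y => m y * M y) volume := by
    refine Integrable.mono' (hmInt.const_mul (2 * D))
      (hmaesm.mul hMcont.aestronglyMeasurable) ?_
    filter_upwards with y
    rw [Real.norm_eq_abs, _root_.abs_of_nonneg (mul_nonneg (hm0 y) (hM0 y)),
      mul_comm (2 * D)]
    exact mul_le_mul_of_nonneg_left (hMC y) (hm0 y)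
  -- real-valued integrable majorants
  have hR : ∀ {u : ℝ → ℂ}, Continuous u → (∀ z, Complex.abs (u z) ≤ D) →
      Integrable (fun y => Complex.abs (q y) * Complex.abs (u y)) volume := by
    intro u hu hD
    refine Integrable.mono' (hq1.const_mul D)
      ((habsq hqm).mul (Complex.continuous_abs.comp hu).aestronglyMeasurable) ?_
    filter_upwards with y
    rw [Real.norm_eq_abs, _root_.abs_of_nonneg (by positivity), mul_comm (D : ℝ)]
    exact mul_le_mul_of_nonneg_left (hD y) (Complex.abs.nonneg _)
  have hR2 : ∀ {u : ℝ → ℂ}, Continuous u → (∀ z, Complex.abs (u z) ≤ D) →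
      Integrable (fun y => Complex.abs (q y) ^ 2 * Complex.abs (u y)) volume := by
    intro u hu hD
    refine Integrable.mono' (hq2.const_mul D)
      ((habsq2 hqm).mul (Complex.continuous_abs.comp hu).aestronglyMeasurable) ?_
    filter_upwards with y
    rw [Real.norm_eq_abs, _root_.abs_of_nonneg (by positivity), mul_comm (D : ℝ)]
    exact mul_le_mul_of_nonneg_left (hD y) (by positivity)
  -- kernel integrability
  have hker : ∀ (x : ℝ) {u : ℝ → ℂ} {Du : ℝ}, Continuous u →
      (∀ z, Complex.abs (u z) ≤ Du) →
      IntegrableOn (fun y =>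
        Complex.exp (2 * Complex.I * k ^ 2 * ((x - y : ℝ) : ℂ)) * q y * u y)
        (Ioi x) volume := by
    intro x u Du hu hDu
    have he : Continuous fun y : ℝ =>
        Complex.exp (2 * Complex.I * k ^ 2 * ((x - y : ℝ) : ℂ)) :=
      Complex.continuous_exp.comp (continuous_const.mul
        (Complex.continuous_ofReal.comp (continuous_const.sub continuous_id)))
    refine Integrable.mono' ((hq1.const_mul Du).integrableOn) ?_ ?_
    · exact (((he.aestronglyMeasurable.mul hqm).mul
        hu.aestronglyMeasurable)).restrict
    · rw [ae_restrict_iff' measurableSet_Ioi]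
      filter_upwards with y hy
      rw [norm_mul, norm_mul, Complex.norm_eq_abs, Complex.norm_eq_abs,
        Complex.norm_eq_abs]
      have h1 := exp_bound hk (le_of_lt hy)
      have h2 := hDu y
      have h3 := Complex.abs.nonneg (q y)
      have h4 := Complex.abs.nonneg (u y)
      have h5 := Complex.abs.nonneg (Complex.exp (2 * Complex.I * k ^ 2 * ((x - y : ℝ) : ℂ)))
      nlinarith [mul_le_mul h1 h2 h4 zero_le_one, mul_nonneg h5 h4]
  have hker2 : ∀ (x : ℝ) {u : ℝ → ℂ} {Du : ℝ}, Continuous u →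
      (∀ z, Complex.abs (u z) ≤ Du) →
      IntegrableOn (fun y =>
        Complex.exp (2 * Complex.I * k ^ 2 * ((x - y : ℝ) : ℂ))
          * (Complex.abs (q y) : ℂ) ^ 2 * u y)
        (Ioi x) volume := by
    intro x u Du hu hDu
    have he : Continuous fun y : ℝ =>
        Complex.exp (2 * Complex.I * k ^ 2 * ((x - y : ℝ) : ℂ)) :=
      Complex.continuous_exp.comp (continuous_const.mul
        (Complex.continuous_ofReal.comp (continuous_const.sub continuous_id)))
    have hq2m : AEStronglyMeasurable (fun y => (Complex.abs (q y) : ℂ) ^ 2) volume := by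
      refine ((Complex.continuous_ofReal.comp_aestronglyMeasurable (habsq hqm)).mul
        (Complex.continuous_ofReal.comp_aestronglyMeasurable (habsq hqm))).congr ?_
      filter_upwards with y
      simp [Pi.mul_apply, pow_two, q]
    refine Integrable.mono' ((hq2.const_mul Du).integrableOn) ?_ ?_
    · exact (((he.aestronglyMeasurable.mul hq2m).mul
        hu.aestronglyMeasurable)).restrict
    · rw [ae_restrict_iff' measurableSet_Ioi]
      filter_upwards with y hy
      rw [norm_mul, norm_mul, Complex.norm_eq_abs, Complex.norm_eq_abs,
        Complex.norm_eq_abs]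
      have habssq : Complex.abs ((Complex.abs (q y) : ℂ) ^ 2) = Complex.abs (q y) ^ 2 := by
        rw [map_pow, Complex.abs_ofReal, _root_.abs_of_nonneg (Complex.abs.nonneg _)]
      rw [habssq]
      have h1 := exp_bound hk (le_of_lt hy)
      have h2 := hDu y
      have h3 : (0:ℝ) ≤ Complex.abs (q y) ^ 2 := by positivity
      have h4 := Complex.abs.nonneg (u y)
      have h5 := Complex.abs.nonneg (Complex.exp (2 * Complex.I * k ^ 2 * ((x - y : ℝ) : ℂ)))
      nlinarith [mul_le_mul h1 h2 h4 zero_le_one, mul_nonneg h5 h4]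
  -- the key Gronwall inequality
  have key : ∀ x, M x ≤ 2 * ∫ y in Ioi x, m y * M y := by
    intro x
    -- difference equations
    have hA : (∫ y in Ioi x, (starRingEnd ℂ) (q y) * g₁ y)
        - (∫ y in Ioi x, (starRingEnd ℂ) (q y) * g₂ y)
        = ∫ y in Ioi x, (starRingEnd ℂ) (q y) * (g₁ y - g₂ y) := by
      rw [← integral_sub (int_conj_mul hqm hq1 hg₁c (fun z => (hC₁ z).2)).integrableOn
        (int_conj_mul hqm hq1 hg₂c (fun z => (hC₂ z).2)).integrableOn]
      exact setIntegral_congr_fun measurableSet_Ioi (fun y _ => by ring)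
    have hB : (∫ y in Ioi x, (Complex.abs (q y) : ℂ) ^ 2 * f₁ y)
        - (∫ y in Ioi x, (Complex.abs (q y) : ℂ) ^ 2 * f₂ y)
        = ∫ y in Ioi x, (Complex.abs (q y) : ℂ) ^ 2 * (f₁ y - f₂ y) := by
      rw [← integral_sub (int_sq_mul hqm hq2 hf₁c (fun z => (hC₁ z).1)).integrableOn
        (int_sq_mul hqm hq2 hf₂c (fun z => (hC₂ z).1)).integrableOn]
      exact setIntegral_congr_fun measurableSet_Ioi (fun y _ => by ring)
    have hh : f₁ x - f₂ x
        = -(k * ∫ y in Ioi x, (starRingEnd ℂ) (q y) * (g₁ y - g₂ y))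
          - (Complex.I / 2) * ∫ y in Ioi x,
              (Complex.abs (q y) : ℂ) ^ 2 * (f₁ y - f₂ y) := by
      linear_combination (heq₁ x).1 - (heq₂ x).1 - k * hA - (Complex.I / 2) * hB
    have hA' : (∫ y in Ioi x,
          Complex.exp (2 * Complex.I * k ^ 2 * ((x - y : ℝ) : ℂ)) * q y * f₁ y)
        - (∫ y in Ioi x,
          Complex.exp (2 * Complex.I * k ^ 2 * ((x - y : ℝ) : ℂ)) * q y * f₂ y)
        = ∫ y in Ioi x,
          Complex.exp (2 * Complex.I * k ^ 2 * ((x - y : ℝ) : ℂ)) * q y * (f₁ y - f₂ y) := by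
      rw [← integral_sub (hker x hf₁c (fun z => (hC₁ z).1))
        (hker x hf₂c (fun z => (hC₂ z).1))]
      exact setIntegral_congr_fun measurableSet_Ioi (fun y _ => by ring)
    have hB' : (∫ y in Ioi x,
          Complex.exp (2 * Complex.I * k ^ 2 * ((x - y : ℝ) : ℂ))
            * (Complex.abs (q y) : ℂ) ^ 2 * g₁ y)
        - (∫ y in Ioi x,
          Complex.exp (2 * Complex.I * k ^ 2 * ((x - y : ℝ) : ℂ))
            * (Complex.abs (q y) : ℂ) ^ 2 * g₂ y)
        = ∫ y in Ioi x,
          Complex.exp (2 * Complex.I * k ^ 2 * ((x - y : ℝ) : ℂ))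
            * (Complex.abs (q y) : ℂ) ^ 2 * (g₁ y - g₂ y) := by
      rw [← integral_sub (hker2 x hg₁c (fun z => (hC₁ z).2))
        (hker2 x hg₂c (fun z => (hC₂ z).2))]
      exact setIntegral_congr_fun measurableSet_Ioi (fun y _ => by ring)
    have hj : g₁ x - g₂ x
        = k * (∫ y in Ioi x,
            Complex.exp (2 * Complex.I * k ^ 2 * ((x - y : ℝ) : ℂ)) * q y * (f₁ y - f₂ y))
          + (Complex.I / 2) * ∫ y in Ioi x,
            Complex.exp (2 * Complex.I * k ^ 2 * ((x - y : ℝ) : ℂ))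
              * (Complex.abs (q y) : ℂ) ^ 2 * (g₁ y - g₂ y) := by
      linear_combination (heq₁ x).2 - (heq₂ x).2 + k * hA' + (Complex.I / 2) * hB'
    have habsI2 : Complex.abs (Complex.I / 2) = 1 / 2 := by
      simp [map_div₀]
    -- bound for |h x|
    have hhb : Complex.abs (f₁ x - f₂ x) ≤ ∫ y in Ioi x, m y * M y := by
      rw [hh]
      have step1 : Complex.abs
          (-(k * ∫ y in Ioi x, (starRingEnd ℂ) (q y) * (g₁ y - g₂ y))
            - (Complex.I / 2) * ∫ y in Ioi x,
              (Complex.abs (q y) : ℂ) ^ 2 * (f₁ y - f₂ y))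
          ≤ Complex.abs k * Complex.abs (∫ y in Ioi x, (starRingEnd ℂ) (q y) * (g₁ y - g₂ y))
            + (1/2) * Complex.abs (∫ y in Ioi x,
              (Complex.abs (q y) : ℂ) ^ 2 * (f₁ y - f₂ y)) := by
        have h0 : -(k * ∫ y in Ioi x, (starRingEnd ℂ) (q y) * (g₁ y - g₂ y))
            - (Complex.I / 2) * ∫ y in Ioi x,
              (Complex.abs (q y) : ℂ) ^ 2 * (f₁ y - f₂ y)
            = -((k * ∫ y in Ioi x, (starRingEnd ℂ) (q y) * (g₁ y - g₂ y))
              + (Complex.I / 2) * ∫ y in Ioi x,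
              (Complex.abs (q y) : ℂ) ^ 2 * (f₁ y - f₂ y)) := by ring
        rw [h0, map_neg_eq_map]
        refine le_trans (Complex.abs.add_le _ _) ?_
        rw [map_mul, map_mul, habsI2]
      refine le_trans step1 ?_
      have n1 : Complex.abs (∫ y in Ioi x, (starRingEnd ℂ) (q y) * (g₁ y - g₂ y))
          ≤ ∫ y in Ioi x, Complex.abs (q y) * Complex.abs (g₁ y - g₂ y) := by
        rw [← Complex.norm_eq_abs]
        refine le_trans (norm_integral_le_integral_norm _)
          (le_of_eq (setIntegral_congr_fun measurableSet_Ioi (fun y _ => ?_)))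
        rw [norm_mul, Complex.norm_eq_abs, Complex.norm_eq_abs, Complex.abs_conj]
      have n2 : Complex.abs (∫ y in Ioi x, (Complex.abs (q y) : ℂ) ^ 2 * (f₁ y - f₂ y))
          ≤ ∫ y in Ioi x, Complex.abs (q y) ^ 2 * Complex.abs (f₁ y - f₂ y) := by
        rw [← Complex.norm_eq_abs]
        refine le_trans (norm_integral_le_integral_norm _)
          (le_of_eq (setIntegral_congr_fun measurableSet_Ioi (fun y _ => ?_)))
        rw [norm_mul, Complex.norm_eq_abs, Complex.norm_eq_abs, map_pow,
          Complex.abs_ofReal, _root_.abs_of_nonneg (Complex.abs.nonneg _)]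
      have c1 : Complex.abs k * (∫ y in Ioi x, Complex.abs (q y) * Complex.abs (g₁ y - g₂ y))
          = ∫ y in Ioi x, Complex.abs k * (Complex.abs (q y) * Complex.abs (g₁ y - g₂ y)) :=
        (integral_const_mul _ _).symm
      have c2 : (1/2 : ℝ) * (∫ y in Ioi x, Complex.abs (q y) ^ 2 * Complex.abs (f₁ y - f₂ y))
          = ∫ y in Ioi x, (1/2 : ℝ) * (Complex.abs (q y) ^ 2 * Complex.abs (f₁ y - f₂ y)) :=
        (integral_const_mul _ _).symm
      have sum_le : (∫ y in Ioi x, Complex.abs k * (Complex.abs (q y) * Complex.abs (g₁ y - g₂ y)))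
          + (∫ y in Ioi x, (1/2 : ℝ) * (Complex.abs (q y) ^ 2 * Complex.abs (f₁ y - f₂ y)))
          ≤ ∫ y in Ioi x, m y * M y := by
        rw [← integral_add (((hR hjc hDj).const_mul (Complex.abs k)).integrableOn)
          (((hR2 hhc hDh).const_mul (1/2 : ℝ)).integrableOn)]
        refine setIntegral_mono_on (((hR hjc hDj).const_mul (Complex.abs k)).integrableOn.add
          (((hR2 hhc hDh).const_mul (1/2 : ℝ)).integrableOn)) hmM.integrableOn
          measurableSet_Ioi (fun y _ => ?_)
        simp only [hmdef, hMdef]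
        nlinarith [Complex.abs.nonneg k, Complex.abs.nonneg (q y),
          Complex.abs.nonneg (g₁ y - g₂ y), Complex.abs.nonneg (f₁ y - f₂ y),
          mul_nonneg (mul_nonneg (Complex.abs.nonneg k) (Complex.abs.nonneg (q y)))
            (Complex.abs.nonneg (f₁ y - f₂ y)),
          mul_nonneg (mul_nonneg (Complex.abs.nonneg (q y)) (Complex.abs.nonneg (q y)))
            (Complex.abs.nonneg (g₁ y - g₂ y))]
      calc Complex.abs k * Complex.abs (∫ y in Ioi x, (starRingEnd ℂ) (q y) * (g₁ y - g₂ y))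
            + (1/2) * Complex.abs (∫ y in Ioi x,
              (Complex.abs (q y) : ℂ) ^ 2 * (f₁ y - f₂ y))
          ≤ Complex.abs k * (∫ y in Ioi x, Complex.abs (q y) * Complex.abs (g₁ y - g₂ y))
            + (1/2) * (∫ y in Ioi x, Complex.abs (q y) ^ 2 * Complex.abs (f₁ y - f₂ y)) := by
            gcongr
        _ ≤ ∫ y in Ioi x, m y * M y := by rw [c1, c2]; exact sum_le
    -- bound for |j x|
    have hjb : Complex.abs (g₁ x - g₂ x) ≤ ∫ y in Ioi x, m y * M y := by
      rw [hj]
      have step1 : Complex.abs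
          (k * (∫ y in Ioi x,
            Complex.exp (2 * Complex.I * k ^ 2 * ((x - y : ℝ) : ℂ)) * q y * (f₁ y - f₂ y))
          + (Complex.I / 2) * ∫ y in Ioi x,
            Complex.exp (2 * Complex.I * k ^ 2 * ((x - y : ℝ) : ℂ))
              * (Complex.abs (q y) : ℂ) ^ 2 * (g₁ y - g₂ y))
          ≤ Complex.abs k * Complex.abs (∫ y in Ioi x,
            Complex.exp (2 * Complex.I * k ^ 2 * ((x - y : ℝ) : ℂ)) * q y * (f₁ y - f₂ y))
            + (1/2) * Complex.abs (∫ y in Ioi x,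
            Complex.exp (2 * Complex.I * k ^ 2 * ((x - y : ℝ) : ℂ))
              * (Complex.abs (q y) : ℂ) ^ 2 * (g₁ y - g₂ y)) := by
        refine le_trans (Complex.abs.add_le _ _) ?_
        rw [map_mul, map_mul, habsI2]
      refine le_trans step1 ?_
      have n1 : Complex.abs (∫ y in Ioi x,
            Complex.exp (2 * Complex.I * k ^ 2 * ((x - y : ℝ) : ℂ)) * q y * (f₁ y - f₂ y))
          ≤ ∫ y in Ioi x, Complex.abs (q y) * Complex.abs (f₁ y - f₂ y) := by
        rw [← Complex.norm_eq_abs]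
        refine le_trans (norm_integral_le_integral_norm _) ?_
        refine setIntegral_mono_on (hker x hhc hDh).norm
          (hR hhc hDh).integrableOn measurableSet_Ioi (fun y hy => ?_)
        rw [norm_mul, norm_mul, Complex.norm_eq_abs, Complex.norm_eq_abs,
          Complex.norm_eq_abs]
        have h1 := exp_bound hk (le_of_lt hy)
        nlinarith [Complex.abs.nonneg (q y), Complex.abs.nonneg (f₁ y - f₂ y),
          mul_nonneg (Complex.abs.nonneg (q y)) (Complex.abs.nonneg (f₁ y - f₂ y)),
          Complex.abs.nonneg (Complex.exp (2 * Complex.I * k ^ 2 * ((x - y : ℝ) : ℂ)))]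
      have n2 : Complex.abs (∫ y in Ioi x,
            Complex.exp (2 * Complex.I * k ^ 2 * ((x - y : ℝ) : ℂ))
              * (Complex.abs (q y) : ℂ) ^ 2 * (g₁ y - g₂ y))
          ≤ ∫ y in Ioi x, Complex.abs (q y) ^ 2 * Complex.abs (g₁ y - g₂ y) := by
        rw [← Complex.norm_eq_abs]
        refine le_trans (norm_integral_le_integral_norm _) ?_
        refine setIntegral_mono_on (hker2 x hjc hDj).norm
          (hR2 hjc hDj).integrableOn measurableSet_Ioi (fun y hy => ?_)
        rw [norm_mul, norm_mul, Complex.norm_eq_abs, Complex.norm_eq_abs,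
          Complex.norm_eq_abs, map_pow, Complex.abs_ofReal,
          _root_.abs_of_nonneg (Complex.abs.nonneg _)]
        have h1 := exp_bound hk (le_of_lt hy)
        have h3 : (0:ℝ) ≤ Complex.abs (q y) ^ 2 := by positivity
        nlinarith [Complex.abs.nonneg (g₁ y - g₂ y),
          mul_nonneg h3 (Complex.abs.nonneg (g₁ y - g₂ y)),
          Complex.abs.nonneg (Complex.exp (2 * Complex.I * k ^ 2 * ((x - y : ℝ) : ℂ)))]
      have c1 : Complex.abs k * (∫ y in Ioi x, Complex.abs (q y) * Complex.abs (f₁ y - f₂ y))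
          = ∫ y in Ioi x, Complex.abs k * (Complex.abs (q y) * Complex.abs (f₁ y - f₂ y)) :=
        (integral_const_mul _ _).symm
      have c2 : (1/2 : ℝ) * (∫ y in Ioi x, Complex.abs (q y) ^ 2 * Complex.abs (g₁ y - g₂ y))
          = ∫ y in Ioi x, (1/2 : ℝ) * (Complex.abs (q y) ^ 2 * Complex.abs (g₁ y - g₂ y)) :=
        (integral_const_mul _ _).symm
      have sum_le : (∫ y in Ioi x, Complex.abs k * (Complex.abs (q y) * Complex.abs (f₁ y - f₂ y)))
          + (∫ y in Ioi x, (1/2 : ℝ) * (Complex.abs (q y) ^ 2 * Complex.abs (g₁ y - g₂ y)))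
          ≤ ∫ y in Ioi x, m y * M y := by
        rw [← integral_add (((hR hhc hDh).const_mul (Complex.abs k)).integrableOn)
          (((hR2 hjc hDj).const_mul (1/2 : ℝ)).integrableOn)]
        refine setIntegral_mono_on (((hR hhc hDh).const_mul (Complex.abs k)).integrableOn.add
          (((hR2 hjc hDj).const_mul (1/2 : ℝ)).integrableOn)) hmM.integrableOn
          measurableSet_Ioi (fun y _ => ?_)
        simp only [hmdef, hMdef]
        nlinarith [Complex.abs.nonneg k, Complex.abs.nonneg (q y),
          Complex.abs.nonneg (g₁ y - g₂ y), Complex.abs.nonneg (f₁ y - f₂ y),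
          mul_nonneg (mul_nonneg (Complex.abs.nonneg k) (Complex.abs.nonneg (q y)))
            (Complex.abs.nonneg (g₁ y - g₂ y)),
          mul_nonneg (mul_nonneg (Complex.abs.nonneg (q y)) (Complex.abs.nonneg (q y)))
            (Complex.abs.nonneg (f₁ y - f₂ y))]
      calc Complex.abs k * Complex.abs (∫ y in Ioi x,
            Complex.exp (2 * Complex.I * k ^ 2 * ((x - y : ℝ) : ℂ)) * q y * (f₁ y - f₂ y))
            + (1/2) * Complex.abs (∫ y in Ioi x,
            Complex.exp (2 * Complex.I * k ^ 2 * ((x - y : ℝ) : ℂ))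
              * (Complex.abs (q y) : ℂ) ^ 2 * (g₁ y - g₂ y))
          ≤ Complex.abs k * (∫ y in Ioi x, Complex.abs (q y) * Complex.abs (f₁ y - f₂ y))
            + (1/2) * (∫ y in Ioi x, Complex.abs (q y) ^ 2 * Complex.abs (g₁ y - g₂ y)) := by
            gcongr
        _ ≤ ∫ y in Ioi x, m y * M y := by rw [c1, c2]; exact sum_le
    have := add_le_add hhb hjb
    simp only [hMdef] at *
    linarith
  -- conclude via Gronwall
  have hzero := gronwall_zero m M hmInt hm0 hMcont hM0 (2 * D) hMC key
  intro x
  have hx := hzero x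
  simp only [hMdef] at hx
  have h1 : Complex.abs (f₁ x - f₂ x) = 0 := by
    have := Complex.abs.nonneg (f₁ x - f₂ x)
    have := Complex.abs.nonneg (g₁ x - g₂ x)
    linarith
  have h2 : Complex.abs (g₁ x - g₂ x) = 0 := by
    have := Complex.abs.nonneg (f₁ x - f₂ x)
    have := Complex.abs.nonneg (g₁ x - g₂ x)
    linarith
  constructor
  · have := Complex.abs.eq_zero.mp h1; exact sub_eq_zero.mp this
  · have := Complex.abs.eq_zero.mp h2; exact sub_eq_zero.mp this

lemma minus_unique (hq1 : Integrable (fun x => Complex.abs (qf u₀ x)) volume)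
    (hq2 : Integrable (fun x => Complex.abs (qf u₀ x) ^ 2) volume)
    (hqm : AEStronglyMeasurable (qf u₀) volume)
    (k : ℂ) (hk : 0 ≤ (k ^ 2).im) {f₁ g₁ f₂ g₂ : ℝ → ℂ}
    (h₁ : SolMinus u₀ k f₁ g₁) (h₂ : SolMinus u₀ k f₂ g₂) :
    ∀ x, f₁ x = f₂ x ∧ g₁ x = g₂ x := by
  obtain ⟨hf₁c, hg₁c, ⟨C₁, hC₁⟩, heq₁⟩ := h₁
  obtain ⟨hf₂c, hg₂c, ⟨C₂, hC₂⟩, heq₂⟩ := h₂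
  simp only [Complex.norm_eq_abs] at heq₁ heq₂
  set q : ℝ → ℂ := qf u₀ with hqdef
  set D : ℝ := C₁ + C₂ with hDdef
  have hDh : ∀ x, Complex.abs (f₁ x - f₂ x) ≤ D := by
    intro x
    calc Complex.abs (f₁ x - f₂ x) ≤ Complex.abs (f₁ x) + Complex.abs (f₂ x) := by
          simpa [Complex.norm_eq_abs] using norm_sub_le (f₁ x) (f₂ x)
      _ ≤ D := add_le_add (hC₁ x).1 (hC₂ x).1
  have hDj : ∀ x, Complex.abs (g₁ x - g₂ x) ≤ D := by
    intro x
    calc Complex.abs (g₁ x - g₂ x) ≤ Complex.abs (g₁ x) + Complex.abs (g₂ x) := by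
          simpa [Complex.norm_eq_abs] using norm_sub_le (g₁ x) (g₂ x)
      _ ≤ D := add_le_add (hC₁ x).2 (hC₂ x).2
  have hD0 : 0 ≤ D := le_trans (Complex.abs.nonneg _) (hDh 0)
  have hhc : Continuous (fun x => f₁ x - f₂ x) := hf₁c.sub hf₂c
  have hjc : Continuous (fun x => g₁ x - g₂ x) := hg₁c.sub hg₂c
  set M : ℝ → ℝ := fun x => Complex.abs (f₁ x - f₂ x) + Complex.abs (g₁ x - g₂ x)
    with hMdef
  set m : ℝ → ℝ := fun y => Complex.abs k * Complex.abs (q y)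
    + Complex.abs (q y) ^ 2 / 2 with hmdef
  have hm0 : ∀ y, 0 ≤ m y := fun y => by positivity
  have hM0 : ∀ x, 0 ≤ M x := fun x =>
    add_nonneg (Complex.abs.nonneg _) (Complex.abs.nonneg _)
  have hMC : ∀ x, M x ≤ 2 * D := fun x => by
    have := hDh x; have := hDj x; simp only [hMdef]; linarith
  have hMcont : Continuous M :=
    (Complex.continuous_abs.comp hhc).add (Complex.continuous_abs.comp hjc)
  have hmInt : Integrable m volume :=
    (hq1.const_mul (Complex.abs k)).add (hq2.div_const 2)
  have hmaesm : AEStronglyMeasurable m volume := hmInt.aestronglyMeasurable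
  have hmM : Integrable (fun y => m y * M y) volume := by
    refine Integrable.mono' (hmInt.const_mul (2 * D))
      (hmaesm.mul hMcont.aestronglyMeasurable) ?_
    filter_upwards with y
    rw [Real.norm_eq_abs, _root_.abs_of_nonneg (mul_nonneg (hm0 y) (hM0 y)),
      mul_comm (2 * D)]
    exact mul_le_mul_of_nonneg_left (hMC y) (hm0 y)
  -- real-valued integrable majorants
  have hR : ∀ {u : ℝ → ℂ}, Continuous u → (∀ z, Complex.abs (u z) ≤ D) →
      Integrable (fun y => Complex.abs (q y) * Complex.abs (u y)) volume := by
    intro u hu hD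
    refine Integrable.mono' (hq1.const_mul D)
      ((habsq hqm).mul (Complex.continuous_abs.comp hu).aestronglyMeasurable) ?_
    filter_upwards with y
    rw [Real.norm_eq_abs, _root_.abs_of_nonneg (by positivity), mul_comm (D : ℝ)]
    exact mul_le_mul_of_nonneg_left (hD y) (Complex.abs.nonneg _)
  have hR2 : ∀ {u : ℝ → ℂ}, Continuous u → (∀ z, Complex.abs (u z) ≤ D) →
      Integrable (fun y => Complex.abs (q y) ^ 2 * Complex.abs (u y)) volume := by
    intro u hu hD
    refine Integrable.mono' (hq2.const_mul D)
      ((habsq2 hqm).mul (Complex.continuous_abs.comp hu).aestronglyMeasurable) ?_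
    filter_upwards with y
    rw [Real.norm_eq_abs, _root_.abs_of_nonneg (by positivity), mul_comm (D : ℝ)]
    exact mul_le_mul_of_nonneg_left (hD y) (by positivity)
  -- kernel integrability
  have hker : ∀ (x : ℝ) {u : ℝ → ℂ} {Du : ℝ}, Continuous u →
      (∀ z, Complex.abs (u z) ≤ Du) →
      IntegrableOn (fun y =>
        Complex.exp (2 * Complex.I * k ^ 2 * ((x - y : ℝ) : ℂ)) * q y * u y)
        (Iio x) volume := by
    intro x u Du hu hDu
    have he : Continuous fun y : ℝ =>
        Complex.exp (2 * Complex.I * k ^ 2 * ((x - y : ℝ) : ℂ)) :=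
      Complex.continuous_exp.comp (continuous_const.mul
        (Complex.continuous_ofReal.comp (continuous_const.sub continuous_id)))
    refine Integrable.mono' ((hq1.const_mul Du).integrableOn) ?_ ?_
    · exact (((he.aestronglyMeasurable.mul hqm).mul
        hu.aestronglyMeasurable)).restrict
    · rw [ae_restrict_iff' measurableSet_Iio]
      filter_upwards with y hy
      rw [norm_mul, norm_mul, Complex.norm_eq_abs, Complex.norm_eq_abs,
        Complex.norm_eq_abs]
      have h1 := exp_bound' hk (le_of_lt hy)
      have h2 := hDu y
      have h3 := Complex.abs.nonneg (q y)
      have h4 := Complex.abs.nonneg (u y)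
      have h5 := Complex.abs.nonneg (Complex.exp (2 * Complex.I * k ^ 2 * ((x - y : ℝ) : ℂ)))
      nlinarith [mul_le_mul h1 h2 h4 zero_le_one, mul_nonneg h5 h4]
  have hker2 : ∀ (x : ℝ) {u : ℝ → ℂ} {Du : ℝ}, Continuous u →
      (∀ z, Complex.abs (u z) ≤ Du) →
      IntegrableOn (fun y =>
        Complex.exp (2 * Complex.I * k ^ 2 * ((x - y : ℝ) : ℂ))
          * (Complex.abs (q y) : ℂ) ^ 2 * u y)
        (Iio x) volume := by
    intro x u Du hu hDu
    have he : Continuous fun y : ℝ =>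
        Complex.exp (2 * Complex.I * k ^ 2 * ((x - y : ℝ) : ℂ)) :=
      Complex.continuous_exp.comp (continuous_const.mul
        (Complex.continuous_ofReal.comp (continuous_const.sub continuous_id)))
    have hq2m : AEStronglyMeasurable (fun y => (Complex.abs (q y) : ℂ) ^ 2) volume := by
      refine ((Complex.continuous_ofReal.comp_aestronglyMeasurable (habsq hqm)).mul
        (Complex.continuous_ofReal.comp_aestronglyMeasurable (habsq hqm))).congr ?_
      filter_upwards with y
      simp [Pi.mul_apply, pow_two, q]
    refine Integrable.mono' ((hq2.const_mul Du).integrableOn) ?_ ?_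
    · exact (((he.aestronglyMeasurable.mul hq2m).mul
        hu.aestronglyMeasurable)).restrict
    · rw [ae_restrict_iff' measurableSet_Iio]
      filter_upwards with y hy
      rw [norm_mul, norm_mul, Complex.norm_eq_abs, Complex.norm_eq_abs,
        Complex.norm_eq_abs]
      have habssq : Complex.abs ((Complex.abs (q y) : ℂ) ^ 2) = Complex.abs (q y) ^ 2 := by
        rw [map_pow, Complex.abs_ofReal, _root_.abs_of_nonneg (Complex.abs.nonneg _)]
      rw [habssq]
      have h1 := exp_bound' hk (le_of_lt hy)
      have h2 := hDu y
      have h3 : (0:ℝ) ≤ Complex.abs (q y) ^ 2 := by positivity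
      have h4 := Complex.abs.nonneg (u y)
      have h5 := Complex.abs.nonneg (Complex.exp (2 * Complex.I * k ^ 2 * ((x - y : ℝ) : ℂ)))
      nlinarith [mul_le_mul h1 h2 h4 zero_le_one, mul_nonneg h5 h4]
  -- the key Gronwall inequality
  have key : ∀ x, M x ≤ 2 * ∫ y in Iio x, m y * M y := by
    intro x
    -- difference equations
    have hA : (∫ y in Iio x, (starRingEnd ℂ) (q y) * g₁ y)
        - (∫ y in Iio x, (starRingEnd ℂ) (q y) * g₂ y)
        = ∫ y in Iio x, (starRingEnd ℂ) (q y) * (g₁ y - g₂ y) := by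
      rw [← integral_sub (int_conj_mul hqm hq1 hg₁c (fun z => (hC₁ z).2)).integrableOn
        (int_conj_mul hqm hq1 hg₂c (fun z => (hC₂ z).2)).integrableOn]
      exact setIntegral_congr_fun measurableSet_Iio (fun y _ => by ring)
    have hB : (∫ y in Iio x, (Complex.abs (q y) : ℂ) ^ 2 * f₁ y)
        - (∫ y in Iio x, (Complex.abs (q y) : ℂ) ^ 2 * f₂ y)
        = ∫ y in Iio x, (Complex.abs (q y) : ℂ) ^ 2 * (f₁ y - f₂ y) := by
      rw [← integral_sub (int_sq_mul hqm hq2 hf₁c (fun z => (hC₁ z).1)).integrableOn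
        (int_sq_mul hqm hq2 hf₂c (fun z => (hC₂ z).1)).integrableOn]
      exact setIntegral_congr_fun measurableSet_Iio (fun y _ => by ring)
    have hh : f₁ x - f₂ x
        = k * (∫ y in Iio x, (starRingEnd ℂ) (q y) * (g₁ y - g₂ y))
          + (Complex.I / 2) * ∫ y in Iio x,
              (Complex.abs (q y) : ℂ) ^ 2 * (f₁ y - f₂ y) := by
      linear_combination (heq₁ x).1 - (heq₂ x).1 + k * hA + (Complex.I / 2) * hB
    have hA' : (∫ y in Iio x,
          Complex.exp (2 * Complex.I * k ^ 2 * ((x - y : ℝ) : ℂ)) * q y * f₁ y)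
        - (∫ y in Iio x,
          Complex.exp (2 * Complex.I * k ^ 2 * ((x - y : ℝ) : ℂ)) * q y * f₂ y)
        = ∫ y in Iio x,
          Complex.exp (2 * Complex.I * k ^ 2 * ((x - y : ℝ) : ℂ)) * q y * (f₁ y - f₂ y) := by
      rw [← integral_sub (hker x hf₁c (fun z => (hC₁ z).1))
        (hker x hf₂c (fun z => (hC₂ z).1))]
      exact setIntegral_congr_fun measurableSet_Iio (fun y _ => by ring)
    have hB' : (∫ y in Iio x,
          Complex.exp (2 * Complex.I * k ^ 2 * ((x - y : ℝ) : ℂ))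
            * (Complex.abs (q y) : ℂ) ^ 2 * g₁ y)
        - (∫ y in Iio x,
          Complex.exp (2 * Complex.I * k ^ 2 * ((x - y : ℝ) : ℂ))
            * (Complex.abs (q y) : ℂ) ^ 2 * g₂ y)
        = ∫ y in Iio x,
          Complex.exp (2 * Complex.I * k ^ 2 * ((x - y : ℝ) : ℂ))
            * (Complex.abs (q y) : ℂ) ^ 2 * (g₁ y - g₂ y) := by
      rw [← integral_sub (hker2 x hg₁c (fun z => (hC₁ z).2))
        (hker2 x hg₂c (fun z => (hC₂ z).2))]
      exact setIntegral_congr_fun measurableSet_Iio (fun y _ => by ring)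
    have hj : g₁ x - g₂ x
        = -(k * ∫ y in Iio x,
            Complex.exp (2 * Complex.I * k ^ 2 * ((x - y : ℝ) : ℂ)) * q y * (f₁ y - f₂ y))
          - (Complex.I / 2) * ∫ y in Iio x,
            Complex.exp (2 * Complex.I * k ^ 2 * ((x - y : ℝ) : ℂ))
              * (Complex.abs (q y) : ℂ) ^ 2 * (g₁ y - g₂ y) := by
      linear_combination (heq₁ x).2 - (heq₂ x).2 - k * hA' - (Complex.I / 2) * hB'
    have habsI2 : Complex.abs (Complex.I / 2) = 1 / 2 := by
      simp [map_div₀]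
    -- bound for |h x|
    have hhb : Complex.abs (f₁ x - f₂ x) ≤ ∫ y in Iio x, m y * M y := by
      rw [hh]
      have step1 : Complex.abs
          (k * (∫ y in Iio x, (starRingEnd ℂ) (q y) * (g₁ y - g₂ y))
            + (Complex.I / 2) * ∫ y in Iio x,
              (Complex.abs (q y) : ℂ) ^ 2 * (f₁ y - f₂ y))
          ≤ Complex.abs k * Complex.abs (∫ y in Iio x, (starRingEnd ℂ) (q y) * (g₁ y - g₂ y))
            + (1/2) * Complex.abs (∫ y in Iio x,
              (Complex.abs (q y) : ℂ) ^ 2 * (f₁ y - f₂ y)) := by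
        refine le_trans (Complex.abs.add_le _ _) ?_
        rw [map_mul, map_mul, habsI2]
      refine le_trans step1 ?_
      have n1 : Complex.abs (∫ y in Iio x, (starRingEnd ℂ) (q y) * (g₁ y - g₂ y))
          ≤ ∫ y in Iio x, Complex.abs (q y) * Complex.abs (g₁ y - g₂ y) := by
        rw [← Complex.norm_eq_abs]
        refine le_trans (norm_integral_le_integral_norm _)
          (le_of_eq (setIntegral_congr_fun measurableSet_Iio (fun y _ => ?_)))
        rw [norm_mul, Complex.norm_eq_abs, Complex.norm_eq_abs, Complex.abs_conj]
      have n2 : Complex.abs (∫ y in Iio x, (Complex.abs (q y) : ℂ) ^ 2 * (f₁ y - f₂ y))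
          ≤ ∫ y in Iio x, Complex.abs (q y) ^ 2 * Complex.abs (f₁ y - f₂ y) := by
        rw [← Complex.norm_eq_abs]
        refine le_trans (norm_integral_le_integral_norm _)
          (le_of_eq (setIntegral_congr_fun measurableSet_Iio (fun y _ => ?_)))
        rw [norm_mul, Complex.norm_eq_abs, Complex.norm_eq_abs, map_pow,
          Complex.abs_ofReal, _root_.abs_of_nonneg (Complex.abs.nonneg _)]
      have c1 : Complex.abs k * (∫ y in Iio x, Complex.abs (q y) * Complex.abs (g₁ y - g₂ y))
          = ∫ y in Iio x, Complex.abs k * (Complex.abs (q y) * Complex.abs (g₁ y - g₂ y)) :=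
        (integral_const_mul _ _).symm
      have c2 : (1/2 : ℝ) * (∫ y in Iio x, Complex.abs (q y) ^ 2 * Complex.abs (f₁ y - f₂ y))
          = ∫ y in Iio x, (1/2 : ℝ) * (Complex.abs (q y) ^ 2 * Complex.abs (f₁ y - f₂ y)) :=
        (integral_const_mul _ _).symm
      have sum_le : (∫ y in Iio x, Complex.abs k * (Complex.abs (q y) * Complex.abs (g₁ y - g₂ y)))
          + (∫ y in Iio x, (1/2 : ℝ) * (Complex.abs (q y) ^ 2 * Complex.abs (f₁ y - f₂ y)))
          ≤ ∫ y in Iio x, m y * M y := by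
        rw [← integral_add (((hR hjc hDj).const_mul (Complex.abs k)).integrableOn)
          (((hR2 hhc hDh).const_mul (1/2 : ℝ)).integrableOn)]
        refine setIntegral_mono_on (((hR hjc hDj).const_mul (Complex.abs k)).integrableOn.add
          (((hR2 hhc hDh).const_mul (1/2 : ℝ)).integrableOn)) hmM.integrableOn
          measurableSet_Iio (fun y _ => ?_)
        simp only [hmdef, hMdef]
        nlinarith [Complex.abs.nonneg k, Complex.abs.nonneg (q y),
          Complex.abs.nonneg (g₁ y - g₂ y), Complex.abs.nonneg (f₁ y - f₂ y),
          mul_nonneg (mul_nonneg (Complex.abs.nonneg k) (Complex.abs.nonneg (q y)))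
            (Complex.abs.nonneg (f₁ y - f₂ y)),
          mul_nonneg (mul_nonneg (Complex.abs.nonneg (q y)) (Complex.abs.nonneg (q y)))
            (Complex.abs.nonneg (g₁ y - g₂ y))]
      calc Complex.abs k * Complex.abs (∫ y in Iio x, (starRingEnd ℂ) (q y) * (g₁ y - g₂ y))
            + (1/2) * Complex.abs (∫ y in Iio x,
              (Complex.abs (q y) : ℂ) ^ 2 * (f₁ y - f₂ y))
          ≤ Complex.abs k * (∫ y in Iio x, Complex.abs (q y) * Complex.abs (g₁ y - g₂ y))
            + (1/2) * (∫ y in Iio x, Complex.abs (q y) ^ 2 * Complex.abs (f₁ y - f₂ y)) := by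
            gcongr
        _ ≤ ∫ y in Iio x, m y * M y := by rw [c1, c2]; exact sum_le
    -- bound for |j x|
    have hjb : Complex.abs (g₁ x - g₂ x) ≤ ∫ y in Iio x, m y * M y := by
      rw [hj]
      have step1 : Complex.abs
          (-(k * ∫ y in Iio x,
            Complex.exp (2 * Complex.I * k ^ 2 * ((x - y : ℝ) : ℂ)) * q y * (f₁ y - f₂ y))
          - (Complex.I / 2) * ∫ y in Iio x,
            Complex.exp (2 * Complex.I * k ^ 2 * ((x - y : ℝ) : ℂ))
              * (Complex.abs (q y) : ℂ) ^ 2 * (g₁ y - g₂ y))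
          ≤ Complex.abs k * Complex.abs (∫ y in Iio x,
            Complex.exp (2 * Complex.I * k ^ 2 * ((x - y : ℝ) : ℂ)) * q y * (f₁ y - f₂ y))
            + (1/2) * Complex.abs (∫ y in Iio x,
            Complex.exp (2 * Complex.I * k ^ 2 * ((x - y : ℝ) : ℂ))
              * (Complex.abs (q y) : ℂ) ^ 2 * (g₁ y - g₂ y)) := by
        have h0 : -(k * ∫ y in Iio x,
            Complex.exp (2 * Complex.I * k ^ 2 * ((x - y : ℝ) : ℂ)) * q y * (f₁ y - f₂ y))
          - (Complex.I / 2) * ∫ y in Iio x,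
            Complex.exp (2 * Complex.I * k ^ 2 * ((x - y : ℝ) : ℂ))
              * (Complex.abs (q y) : ℂ) ^ 2 * (g₁ y - g₂ y)
            = -((k * ∫ y in Iio x,
            Complex.exp (2 * Complex.I * k ^ 2 * ((x - y : ℝ) : ℂ)) * q y * (f₁ y - f₂ y))
          + (Complex.I / 2) * ∫ y in Iio x,
            Complex.exp (2 * Complex.I * k ^ 2 * ((x - y : ℝ) : ℂ))
              * (Complex.abs (q y) : ℂ) ^ 2 * (g₁ y - g₂ y)) := by ring
        rw [h0, map_neg_eq_map]
        refine le_trans (Complex.abs.add_le _ _) ?_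
        rw [map_mul, map_mul, habsI2]
      refine le_trans step1 ?_
      have n1 : Complex.abs (∫ y in Iio x,
            Complex.exp (2 * Complex.I * k ^ 2 * ((x - y : ℝ) : ℂ)) * q y * (f₁ y - f₂ y))
          ≤ ∫ y in Iio x, Complex.abs (q y) * Complex.abs (f₁ y - f₂ y) := by
        rw [← Complex.norm_eq_abs]
        refine le_trans (norm_integral_le_integral_norm _) ?_
        refine setIntegral_mono_on (hker x hhc hDh).norm
          (hR hhc hDh).integrableOn measurableSet_Iio (fun y hy => ?_)
        rw [norm_mul, norm_mul, Complex.norm_eq_abs, Complex.norm_eq_abs,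
          Complex.norm_eq_abs]
        have h1 := exp_bound' hk (le_of_lt hy)
        nlinarith [Complex.abs.nonneg (q y), Complex.abs.nonneg (f₁ y - f₂ y),
          mul_nonneg (Complex.abs.nonneg (q y)) (Complex.abs.nonneg (f₁ y - f₂ y)),
          Complex.abs.nonneg (Complex.exp (2 * Complex.I * k ^ 2 * ((x - y : ℝ) : ℂ)))]
      have n2 : Complex.abs (∫ y in Iio x,
            Complex.exp (2 * Complex.I * k ^ 2 * ((x - y : ℝ) : ℂ))
              * (Complex.abs (q y) : ℂ) ^ 2 * (g₁ y - g₂ y))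
          ≤ ∫ y in Iio x, Complex.abs (q y) ^ 2 * Complex.abs (g₁ y - g₂ y) := by
        rw [← Complex.norm_eq_abs]
        refine le_trans (norm_integral_le_integral_norm _) ?_
        refine setIntegral_mono_on (hker2 x hjc hDj).norm
          (hR2 hjc hDj).integrableOn measurableSet_Iio (fun y hy => ?_)
        rw [norm_mul, norm_mul, Complex.norm_eq_abs, Complex.norm_eq_abs,
          Complex.norm_eq_abs, map_pow, Complex.abs_ofReal,
          _root_.abs_of_nonneg (Complex.abs.nonneg _)]
        have h1 := exp_bound' hk (le_of_lt hy)
        have h3 : (0:ℝ) ≤ Complex.abs (q y) ^ 2 := by positivity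
        nlinarith [Complex.abs.nonneg (g₁ y - g₂ y),
          mul_nonneg h3 (Complex.abs.nonneg (g₁ y - g₂ y)),
          Complex.abs.nonneg (Complex.exp (2 * Complex.I * k ^ 2 * ((x - y : ℝ) : ℂ)))]
      have c1 : Complex.abs k * (∫ y in Iio x, Complex.abs (q y) * Complex.abs (f₁ y - f₂ y))
          = ∫ y in Iio x, Complex.abs k * (Complex.abs (q y) * Complex.abs (f₁ y - f₂ y)) :=
        (integral_const_mul _ _).symm
      have c2 : (1/2 : ℝ) * (∫ y in Iio x, Complex.abs (q y) ^ 2 * Complex.abs (g₁ y - g₂ y))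
          = ∫ y in Iio x, (1/2 : ℝ) * (Complex.abs (q y) ^ 2 * Complex.abs (g₁ y - g₂ y)) :=
        (integral_const_mul _ _).symm
      have sum_le : (∫ y in Iio x, Complex.abs k * (Complex.abs (q y) * Complex.abs (f₁ y - f₂ y)))
          + (∫ y in Iio x, (1/2 : ℝ) * (Complex.abs (q y) ^ 2 * Complex.abs (g₁ y - g₂ y)))
          ≤ ∫ y in Iio x, m y * M y := by
        rw [← integral_add (((hR hhc hDh).const_mul (Complex.abs k)).integrableOn)
          (((hR2 hjc hDj).const_mul (1/2 : ℝ)).integrableOn)]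
        refine setIntegral_mono_on (((hR hhc hDh).const_mul (Complex.abs k)).integrableOn.add
          (((hR2 hjc hDj).const_mul (1/2 : ℝ)).integrableOn)) hmM.integrableOn
          measurableSet_Iio (fun y _ => ?_)
        simp only [hmdef, hMdef]
        nlinarith [Complex.abs.nonneg k, Complex.abs.nonneg (q y),
          Complex.abs.nonneg (g₁ y - g₂ y), Complex.abs.nonneg (f₁ y - f₂ y),
          mul_nonneg (mul_nonneg (Complex.abs.nonneg k) (Complex.abs.nonneg (q y)))
            (Complex.abs.nonneg (g₁ y - g₂ y)),
          mul_nonneg (mul_nonneg (Complex.abs.nonneg (q y)) (Complex.abs.nonneg (q y)))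
            (Complex.abs.nonneg (f₁ y - f₂ y))]
      calc Complex.abs k * Complex.abs (∫ y in Iio x,
            Complex.exp (2 * Complex.I * k ^ 2 * ((x - y : ℝ) : ℂ)) * q y * (f₁ y - f₂ y))
            + (1/2) * Complex.abs (∫ y in Iio x,
            Complex.exp (2 * Complex.I * k ^ 2 * ((x - y : ℝ) : ℂ))
              * (Complex.abs (q y) : ℂ) ^ 2 * (g₁ y - g₂ y))
          ≤ Complex.abs k * (∫ y in Iio x, Complex.abs (q y) * Complex.abs (f₁ y - f₂ y))
            + (1/2) * (∫ y in Iio x, Complex.abs (q y) ^ 2 * Complex.abs (g₁ y - g₂ y)) := by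
            gcongr
        _ ≤ ∫ y in Iio x, m y * M y := by rw [c1, c2]; exact sum_le
    have := add_le_add hhb hjb
    simp only [hMdef] at *
    linarith
  -- conclude via Gronwall
  have hzero := gronwall_zero_left m M hmInt hm0 hMcont hM0 (2 * D) hMC key
  intro x
  have hx := hzero x
  simp only [hMdef] at hx
  have h1 : Complex.abs (f₁ x - f₂ x) = 0 := by
    have := Complex.abs.nonneg (f₁ x - f₂ x)
    have := Complex.abs.nonneg (g₁ x - g₂ x)
    linarith
  have h2 : Complex.abs (g₁ x - g₂ x) = 0 := by
    have := Complex.abs.nonneg (f₁ x - f₂ x)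
    have := Complex.abs.nonneg (g₁ x - g₂ x)
    linarith
  constructor
  · have := Complex.abs.eq_zero.mp h1; exact sub_eq_zero.mp this
  · have := Complex.abs.eq_zero.mp h2; exact sub_eq_zero.mp this


lemma solPlus_neg {k : ℂ} {f g : ℝ → ℂ} (h : SolPlus u₀ k f g) :
    SolPlus u₀ (-k) f (fun x => -g x) := by
  obtain ⟨hf, hg, ⟨C, hC⟩, heq⟩ := h
  have hksq : (-k) ^ 2 = k ^ 2 := by ring
  refine ⟨hf, hg.neg, ⟨C, fun x => ⟨(hC x).1, by
    rw [norm_neg]; exact (hC x).2⟩⟩, fun x => ?_⟩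
  constructor
  · have e1 : (∫ y in Ioi x, (starRingEnd ℂ) (qf u₀ y) * (-(g y)))
        = -∫ y in Ioi x, (starRingEnd ℂ) (qf u₀ y) * g y := by
      rw [← integral_neg]
      exact setIntegral_congr_fun measurableSet_Ioi (fun y _ => by ring)
    rw [e1]
    linear_combination (heq x).1
  · simp only [hksq]
    have e2 : (∫ y in Ioi x, Complex.exp (2 * Complex.I * k ^ 2 * ((x - y : ℝ) : ℂ))
          * (‖qf u₀ y‖ : ℂ) ^ 2 * (-(g y)))
        = -∫ y in Ioi x, Complex.exp (2 * Complex.I * k ^ 2 * ((x - y : ℝ) : ℂ))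
          * (‖qf u₀ y‖ : ℂ) ^ 2 * g y := by
      rw [← integral_neg]
      exact setIntegral_congr_fun measurableSet_Ioi (fun y _ => by ring)
    rw [e2]
    linear_combination (-1 : ℂ) * (heq x).2

lemma solMinus_neg {k : ℂ} {f g : ℝ → ℂ} (h : SolMinus u₀ k f g) :
    SolMinus u₀ (-k) f (fun x => -g x) := by
  obtain ⟨hf, hg, ⟨C, hC⟩, heq⟩ := h
  have hksq : (-k) ^ 2 = k ^ 2 := by ring
  refine ⟨hf, hg.neg, ⟨C, fun x => ⟨(hC x).1, by
    rw [norm_neg]; exact (hC x).2⟩⟩, fun x => ?_⟩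
  constructor
  · have e1 : (∫ y in Iio x, (starRingEnd ℂ) (qf u₀ y) * (-(g y)))
        = -∫ y in Iio x, (starRingEnd ℂ) (qf u₀ y) * g y := by
      rw [← integral_neg]
      exact setIntegral_congr_fun measurableSet_Iio (fun y _ => by ring)
    rw [e1]
    linear_combination (heq x).1
  · simp only [hksq]
    have e2 : (∫ y in Iio x, Complex.exp (2 * Complex.I * k ^ 2 * ((x - y : ℝ) : ℂ))
          * (‖qf u₀ y‖ : ℂ) ^ 2 * (-(g y)))
        = -∫ y in Iio x, Complex.exp (2 * Complex.I * k ^ 2 * ((x - y : ℝ) : ℂ))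
          * (‖qf u₀ y‖ : ℂ) ^ 2 * g y := by
      rw [← integral_neg]
      exact setIntegral_congr_fun measurableSet_Iio (fun y _ => by ring)
    rw [e2]
    linear_combination (-1 : ℂ) * (heq x).2

end uniq

theorem stmt_11 (u₀ : ℝ → ℂ) (hu : MemHms 3 3 u₀)
    (ω11p ω21p ω11m ω21m : ℝ → ℂ → ℂ)
    (hp : ∀ k : ℂ, (k ^ 2).im ≤ 0 →
      SolPlus u₀ k (fun x => ω11p x k) (fun x => ω21p x k))
    (hm : ∀ k : ℂ, 0 ≤ (k ^ 2).im →
      SolMinus u₀ k (fun x => ω11m x k) (fun x => ω21m x k)) :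
    (∀ (x : ℝ) (k : ℂ), (k ^ 2).im ≤ 0 →
      ω11p x (-k) = ω11p x k ∧ ω21p x (-k) = -ω21p x k) ∧
    (∀ (x : ℝ) (k : ℂ), 0 ≤ (k ^ 2).im →
      ω11m x (-k) = ω11m x k ∧ ω21m x (-k) = -ω21m x k) ∧
    (∀ k ∈ SigmaSet,
      acoef ω11p ω21p ω11m ω21m (-k) = acoef ω11p ω21p ω11m ω21m k ∧
      bcoef ω11p ω21p ω11m ω21m (-k) = -bcoef ω11p ω21p ω11m ω21m k) := by
  have hq1 := qf_abs_int hu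
  have hq2 := qf_abs_sq_int hu
  have hqm := qf_aesm hu
  have part1 : ∀ (x : ℝ) (k : ℂ), (k ^ 2).im ≤ 0 →
      ω11p x (-k) = ω11p x k ∧ ω21p x (-k) = -ω21p x k := by
    intro x k hk
    have hk' : ((-k) ^ 2).im ≤ 0 := by rw [neg_sq]; exact hk
    have h1 := hp (-k) hk'
    have h2 := solPlus_neg (hp k hk)
    have h := plus_unique hq1 hq2 hqm (-k) hk' h1 h2 x
    exact ⟨h.1, h.2⟩
  have part2 : ∀ (x : ℝ) (k : ℂ), 0 ≤ (k ^ 2).im →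
      ω11m x (-k) = ω11m x k ∧ ω21m x (-k) = -ω21m x k := by
    intro x k hk
    have hk' : 0 ≤ ((-k) ^ 2).im := by rw [neg_sq]; exact hk
    have h1 := hm (-k) hk'
    have h2 := solMinus_neg (hm k hk)
    have h := minus_unique hq1 hq2 hqm (-k) hk' h1 h2 x
    exact ⟨h.1, h.2⟩
  refine ⟨part1, part2, ?_⟩
  intro k hk
  have hk0 : (k ^ 2).im = 0 := hk
  have hc : (((starRingEnd ℂ) k) ^ 2).im = 0 := by
    rw [← map_pow, Complex.conj_im, hk0, neg_zero]
  have e1 := (part1 0 ((starRingEnd ℂ) k) (le_of_eq hc)).1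
  have e2 := (part1 0 ((starRingEnd ℂ) k) (le_of_eq hc)).2
  have e3 := (part2 0 k hk0.ge).1
  have e4 := (part2 0 k hk0.ge).2
  have e5 := (part2 0 ((starRingEnd ℂ) k) hc.ge).1
  have e6 := (part2 0 ((starRingEnd ℂ) k) hc.ge).2
  constructor
  · simp only [acoef, map_neg, e1, e2, e3, e4]
    ring
  · simp only [bcoef, map_neg, e1, e2, e5, e6]
    ring

end
end
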